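/- Fix m ≥ 1 and 1 ≤ k ≤ N, and let β = (β[1] < β[2] < … < β[k]) be a strictly increasing sequence in {1,…,N}. Define u(β) ∈ ℕ^N by u(β)[β[j]] = m for 1 ≤ j ≤ k and u(β)[i] = 0 otherwise, let σ(β) = {β[1],…,β[k]}, and for 1 ≤ i ≤ N let χ_β(i) = N − i − #{l : β[l] > i}. Let M ∈ ℚ(q,t)[x₁,…,x_N] be a monic shifted nonsymmetric Macdonald polynomial for u(β). Then, substituting t^{χ_β(i)} for each variable x_i with i ∉ σ(β) and leaving the variables x_{β[1]},…,x_{β[k]} free, one has the identity M(x^{(β)}) = Π_{j=1}^{k} [ (x_{β[j]} − t^{N+j−k−β[j]}) · Π_{i=1}^{m−1} (x_{β[j]} − t^{N−k} q^{i}) ] in ℚ(q,t)[x_{β[1]},…,x_{β[k]}], where x^{(β)} denotes the point with coordinates x_i^{(β)} = x_i for i ∈ σ(β) and x_i^{(β)} = t^{χ_β(i)} for i ∉ σ(β). -/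

import Mathlib

open Finset MvPolynomial

noncomputable section

/-- `ℚ[q,t]`. -/
abbrev Qqt : Type := MvPolynomial (Fin 2) ℚ
/-- The field `ℚ(q,t)`. -/
abbrev Kqt : Type := FractionRing Qqt

/-- The parameter `q ∈ ℚ(q,t)`. -/
def qk : Kqt := algebraMap Qqt Kqt (X 0)
/-- The parameter `t ∈ ℚ(q,t)`. -/
def tk : Kqt := algebraMap Qqt Kqt (X 1)

/-- The rank function of `u ∈ ℕ^N`. -/
def rankf {N : ℕ} (u : Fin N → ℕ) (i : Fin N) : ℕ :=
  1 + (univ.filter fun k : Fin N => k < i ∧ u i ≤ u k).card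
    + (univ.filter fun k : Fin N => i < k ∧ u i < u k).card

/-- The spectral point `⟨u⟩ ∈ ℚ(q,t)^N`, `⟨u⟩[i] = q^{u[i]} t^{N − r_u[i]}`. -/
def specPt {N : ℕ} (u : Fin N → ℕ) (i : Fin N) : Kqt :=
  qk ^ u i * tk ^ (N - rankf u i)

/-- `M` is a monic shifted nonsymmetric Macdonald polynomial for `v ∈ ℕ^N`. -/
def MonicShiftedMacdonald {N : ℕ} (v : Fin N → ℕ) (M : MvPolynomial (Fin N) Kqt) : Prop :=
  M.totalDegree ≤ ∑ i, v i ∧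
  M.coeff (Finsupp.equivFunOnFinite.symm v) = 1 ∧
  ∀ u : Fin N → ℕ, (∑ i, u i) ≤ (∑ i, v i) → u ≠ v → eval (specPt u) M = 0

set_option synthInstance.maxHeartbeats 1000000
set_option maxHeartbeats 1000000

namespace PRF

/-! ### q,t basics -/

lemma qt_pow_inj {a b c d : ℕ} (h : qk ^ a * tk ^ b = qk ^ c * tk ^ d) : a = c ∧ b = d := by
  have h1 : algebraMap Qqt Kqt ((X 0) ^ a * (X 1) ^ b) =
      algebraMap Qqt Kqt ((X 0) ^ c * (X 1) ^ d) := by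
    simpa [qk, tk, map_mul, map_pow] using h
  have h2 := IsFractionRing.injective Qqt Kqt h1
  simp only [X_pow_eq_monomial, monomial_mul] at h2
  rw [monomial_eq_monomial_iff] at h2
  rcases h2 with ⟨h3, -⟩ | ⟨h4, -⟩
  · constructor
    · have := DFunLike.congr_fun h3 (0 : Fin 2)
      simpa using this
    · have := DFunLike.congr_fun h3 (1 : Fin 2)
      simpa using this
  · norm_num at h4

lemma qk_ne_zero : qk ≠ 0 := by
  intro h
  have : algebraMap Qqt Kqt (X 0) = algebraMap Qqt Kqt 0 := by simpa [qk] using h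
  have := IsFractionRing.injective Qqt Kqt this
  exact X_ne_zero _ this

lemma tk_ne_zero : tk ≠ 0 := by
  intro h
  have : algebraMap Qqt Kqt (X 1) = algebraMap Qqt Kqt 0 := by simpa [tk] using h
  have := IsFractionRing.injective Qqt Kqt this
  exact X_ne_zero _ this

lemma qt_pow_ne_one {a b : ℕ} (ha : 1 ≤ a) : qk ^ a * tk ^ b ≠ 1 := by
  intro h
  have : qk ^ a * tk ^ b = qk ^ 0 * tk ^ 0 := by simpa using h
  have := (qt_pow_inj this).1
  omega

/-! ### rank basics -/

lemma rankf_eq_sum {N : ℕ} (u : Fin N → ℕ) (i : Fin N) :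
    rankf u i = 1 + (∑ k : Fin N, if k < i ∧ u i ≤ u k then 1 else 0)
      + (∑ k : Fin N, if i < k ∧ u i < u k then 1 else 0) := by
  rw [rankf, card_filter, card_filter]

lemma rankf_pos {N : ℕ} (u : Fin N → ℕ) (i : Fin N) : 1 ≤ rankf u i := by
  rw [rankf]; omega

lemma rankf_le {N : ℕ} (u : Fin N → ℕ) (i : Fin N) : rankf u i ≤ N := by
  classical
  rw [rankf]
  set A := univ.filter fun k : Fin N => k < i ∧ u i ≤ u k with hA
  set B := univ.filter fun k : Fin N => i < k ∧ u i < u k with hB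
  have hdisj : Disjoint A B := by
    rw [Finset.disjoint_left]
    intro k hk hk'
    simp only [hA, hB, mem_filter] at hk hk'
    exact absurd (hk.2.1.trans hk'.2.1) (lt_irrefl _)
  have hsub : A ∪ B ⊆ univ.erase i := by
    intro k hk
    rcases Finset.mem_union.1 hk with hk | hk <;> simp only [hA, hB, mem_filter] at hk
    · exact Finset.mem_erase.2 ⟨ne_of_lt hk.2.1, mem_univ _⟩
    · exact Finset.mem_erase.2 ⟨ne_of_gt hk.2.1, mem_univ _⟩
  have hcard := Finset.card_le_card hsub
  rw [Finset.card_union_of_disjoint hdisj, Finset.card_erase_of_mem (mem_univ _)] at hcard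
  have huniv : (univ : Finset (Fin N)).card = N := by simp
  rw [huniv] at hcard
  have hN : 1 ≤ N := by
    have : 0 < N := i.pos
    omega
  omega

lemma specPt_ne_one {N : ℕ} (z : Fin N → ℕ) (i : Fin N) (h : 1 ≤ z i) :
    specPt z i ≠ 1 := qt_pow_ne_one h

/-! ### aeval composition helpers -/

variable {σ σ' σ'' : Type*}

lemma eval_aeval (x : σ' → Kqt) (f : σ → MvPolynomial σ' Kqt) (p : MvPolynomial σ Kqt) :
    eval x (aeval f p) = eval (fun i => eval x (f i)) p := by
  induction p using MvPolynomial.induction_on with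
  | C a => rw [aeval_C, MvPolynomial.algebraMap_eq, eval_C, eval_C]
  | add p q hp hq => rw [map_add, map_add, map_add, hp, hq]
  | mul_X p i hp => rw [map_mul, map_mul, map_mul, aeval_X, hp, eval_X]

lemma aeval_aeval (f : σ' → MvPolynomial σ'' Kqt) (g : σ → MvPolynomial σ' Kqt)
    (p : MvPolynomial σ Kqt) :
    aeval f (aeval g p) = aeval (fun i => aeval f (g i)) p := by
  induction p using MvPolynomial.induction_on with
  | C a => simp only [MvPolynomial.algebraMap_eq, aeval_C]
  | add p q hp hq => rw [map_add, map_add, map_add, hp, hq]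
  | mul_X p i hp => rw [map_mul, map_mul, map_mul, aeval_X, hp, aeval_X]

/-! ### degree helpers -/

lemma totalDegree_aeval_le {n n' : ℕ} (f : Fin n → MvPolynomial (Fin n') Kqt)
    (hf : ∀ i, (f i).totalDegree ≤ 1) (F : MvPolynomial (Fin n) Kqt) :
    (aeval f F).totalDegree ≤ F.totalDegree := by
  conv_lhs => rw [F.as_sum]
  rw [map_sum]
  refine le_trans (totalDegree_finset_sum _ _) ?_
  refine Finset.sup_le fun m hm => ?_
  rw [aeval_monomial]
  refine le_trans (totalDegree_mul _ _) ?_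
  have h1 : (algebraMap Kqt (MvPolynomial (Fin n') Kqt) (coeff m F)).totalDegree = 0 := by
    simpa using totalDegree_C (R := Kqt) (σ := Fin n') (coeff m F)
  rw [h1, zero_add]
  rw [Finsupp.prod_fintype _ _ (fun i => pow_zero _)]
  refine le_trans (totalDegree_finset_prod _ _) ?_
  have h2 : ∀ i : Fin n, ((f i) ^ (m i)).totalDegree ≤ m i := by
    intro i
    refine le_trans (totalDegree_pow _ _) ?_
    exact le_trans (Nat.mul_le_mul_left _ (hf i)) (by omega)
  refine le_trans (Finset.sum_le_sum fun i _ => h2 i) ?_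
  have h3 : ∑ i : Fin n, m i = m.sum fun _ e => e := by
    rw [Finsupp.sum_fintype]
    intro i; rfl
  rw [h3]
  exact le_totalDegree hm

lemma totalDegree_lin_mul {n : ℕ} (i : Fin n) (a : Kqt) (H : MvPolynomial (Fin n) Kqt)
    (hH : H ≠ 0) : H.totalDegree + 1 ≤ ((X i - C a) * H).totalDegree := by
  classical
  obtain ⟨m, hm, hsup⟩ := Finset.exists_mem_eq_sup H.support
    (support_nonempty.2 hH) (fun s => s.sum fun _ e => e)
  set μ : Fin n →₀ ℕ := Finsupp.single i 1 + m with hμ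
  have hμsum : (μ.sum fun _ e => e) = H.totalDegree + 1 := by
    rw [hμ, Finsupp.sum_add_index (by simp) (by intros; rfl)]
    rw [Finsupp.sum_single_index (by rfl)]
    rw [MvPolynomial.totalDegree, ← hsup]
    omega
  have hcoeffH : coeff μ H = 0 := by
    refine coeff_eq_zero_of_totalDegree_lt ?_
    have : (∑ j ∈ μ.support, μ j) = μ.sum fun _ e => e := rfl
    rw [this, hμsum]
    omega
  have hc : coeff μ ((X i - C a) * H) = coeff m H := by
    rw [sub_mul, coeff_sub, coeff_X_mul, coeff_C_mul, hcoeffH, mul_zero, sub_zero]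
  have hne : coeff μ ((X i - C a) * H) ≠ 0 := by
    rw [hc]
    exact mem_support_iff.1 hm
  have := le_totalDegree (p := (X i - C a) * H) (mem_support_iff.2 hne)
  omega

/-! ### divisibility helper -/

lemma X_sub_C_dvd {n : ℕ} (F : MvPolynomial (Fin n) Kqt) (i : Fin n) (a : Kqt)
    (h : aeval (Function.update X i (C a)) F = 0) : (X i - C a) ∣ F := by
  classical
  have key : ∀ G : MvPolynomial (Fin n) Kqt,
      (X i - C a) ∣ G - aeval (Function.update X i (C a)) G := by
    intro G
    induction G using MvPolynomial.induction_on' with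
    | add p q hp hq =>
      have : p + q - aeval (Function.update X i (C a)) (p + q)
          = (p - aeval (Function.update X i (C a)) p)
            + (q - aeval (Function.update X i (C a)) q) := by
        rw [map_add]; ring
      rw [this]
      exact dvd_add hp hq
    | monomial m c =>
      rw [aeval_monomial, monomial_eq]
      have halg : (algebraMap Kqt (MvPolynomial (Fin n) Kqt)) c = C c := rfl
      rw [halg]
      rw [Finsupp.prod_fintype _ _ (fun j => pow_zero _),
        Finsupp.prod_fintype _ _ (fun j => pow_zero _)]
      rw [← Finset.mul_prod_erase univ _ (mem_univ i), ← Finset.mul_prod_erase univ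
        (fun j => (Function.update X i (C a) j) ^ m j) (mem_univ i)]
      have hsame : ∀ j ∈ univ.erase i, (Function.update X i (C a) j) ^ m j = (X j) ^ m j := by
        intro j hj
        rw [Function.update_of_ne (Finset.mem_erase.1 hj).1]
      rw [Finset.prod_congr rfl hsame, Function.update_self]
      rw [mul_comm (C c) ((X i) ^ m i * _), mul_comm (C c) ((C a) ^ m i * _)]
      rw [mul_assoc, mul_assoc, ← sub_mul]
      exact (sub_dvd_pow_sub_pow (X i) (C a : MvPolynomial (Fin n) Kqt) (m i)).mul_right _
  have key := key F
  rw [h, sub_zero] at key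
  exact key


section RankLemmas
variable {N : ℕ}

lemma lt_succAbove_iff' (i₀ : Fin (N+1)) (j : Fin N) :
    i₀ < i₀.succAbove j ↔ i₀ ≤ j.castSucc := by
  rcases lt_or_ge j.castSucc i₀ with h | h
  · rw [Fin.succAbove_of_castSucc_lt _ _ h]
    simp [not_lt.2 h.le, not_le.2 h]
  · rw [Fin.succAbove_of_le_castSucc _ _ h]
    simp [h, lt_of_le_of_lt h (Fin.castSucc_lt_succ (i := j))]

lemma rankf_add_one (z : Fin N → ℕ) : rankf (fun i => z i + 1) = rankf z := by
  funext i
  rw [rankf_eq_sum, rankf_eq_sum]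
  simp only [add_le_add_iff_right, add_lt_add_iff_right]

lemma specPt_add_one (z : Fin N → ℕ) :
    specPt (fun i => z i + 1) = fun i => qk * specPt z i := by
  funext i
  rw [specPt, specPt, rankf_add_one, pow_succ]
  ring

lemma sum_add_one (z : Fin N → ℕ) : ∑ i, (z i + 1) = (∑ i, z i) + N := by
  rw [Finset.sum_add_distrib]
  simp [mul_comm]

lemma rankf_insertNth_self (i₀ : Fin (N+1)) (w : Fin N → ℕ)
    (hpos : ∀ i : Fin N, i₀ ≤ i.castSucc → 1 ≤ w i) :
    rankf (i₀.insertNth 0 w) i₀ = N + 1 := by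
  rw [rankf_eq_sum]
  rw [Fin.sum_univ_succAbove _ i₀, Fin.sum_univ_succAbove _ i₀]
  simp only [Fin.insertNth_apply_same, Fin.insertNth_apply_succAbove, lt_irrefl,
    false_and, if_false, Nat.zero_le, and_true]
  have key : ∀ i : Fin N, (if i₀.succAbove i < i₀ then (1:ℕ) else 0)
      + (if i₀ < i₀.succAbove i ∧ 0 < w i then 1 else 0) = 1 := by
    intro i
    rcases lt_or_ge i.castSucc i₀ with h | h
    · have h1 : i₀.succAbove i < i₀ := by
        rw [Fin.succAbove_of_castSucc_lt _ _ h]; exact h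
      rw [if_pos h1, if_neg (by simp [not_and_or, not_lt.2 h1.le])]
    · have h1 : i₀ < i₀.succAbove i := (lt_succAbove_iff' i₀ i).2 h
      have h2 : 0 < w i := hpos i h
      rw [if_neg (not_lt.2 h1.le), if_pos ⟨h1, h2⟩]
  have hsum : (∑ i : Fin N, (if i₀.succAbove i < i₀ then (1:ℕ) else 0))
      + (∑ i : Fin N, (if i₀ < i₀.succAbove i ∧ 0 < w i then (1:ℕ) else 0))
      = ∑ i : Fin N, 1 := by
    rw [← Finset.sum_add_distrib]
    exact Finset.sum_congr rfl fun i _ => key i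
  simp only [Finset.sum_const, Finset.card_univ, Fintype.card_fin, smul_eq_mul, mul_one] at hsum
  omega

lemma rankf_insertNth_succAbove (i₀ : Fin (N+1)) (w : Fin N → ℕ)
    (hpos : ∀ i : Fin N, i₀ ≤ i.castSucc → 1 ≤ w i) (j : Fin N) :
    rankf (i₀.insertNth 0 w) (i₀.succAbove j) = rankf w j := by
  rw [rankf_eq_sum, rankf_eq_sum]
  rw [Fin.sum_univ_succAbove _ i₀, Fin.sum_univ_succAbove _ i₀]
  simp only [Fin.insertNth_apply_same, Fin.insertNth_apply_succAbove,
    Fin.succAbove_lt_succAbove_iff, Fin.succAbove_lt_iff_castSucc_lt]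
  have e1 : (if i₀ < i₀.succAbove j ∧ w j ≤ 0 then (1:ℕ) else 0) = 0 := by
    rcases lt_or_ge j.castSucc i₀ with h | h
    · rw [if_neg]
      rintro ⟨h1, -⟩
      exact absurd ((lt_succAbove_iff' i₀ j).1 h1) (not_le.2 h)
    · rw [if_neg]
      rintro ⟨-, h2⟩
      have := hpos j h
      omega
  have e2 : (if j.castSucc < i₀ ∧ w j < 0 then (1:ℕ) else 0) = 0 := by
    rw [if_neg]; rintro ⟨-, h2⟩; omega
  rw [e1, e2]
  omega

lemma specPt_insertNth (i₀ : Fin (N+1)) (w : Fin N → ℕ)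
    (hpos : ∀ i : Fin N, i₀ ≤ i.castSucc → 1 ≤ w i) :
    specPt (i₀.insertNth 0 w) = i₀.insertNth 1 (fun i => tk * specPt w i) := by
  funext r
  rcases eq_or_ne r i₀ with rfl | hr
  · rw [Fin.insertNth_apply_same, specPt, rankf_insertNth_self _ _ hpos,
      Fin.insertNth_apply_same]
    simp
  · obtain ⟨j, rfl⟩ := Fin.exists_succAbove_eq hr
    rw [Fin.insertNth_apply_succAbove, specPt, rankf_insertNth_succAbove _ _ hpos,
      Fin.insertNth_apply_succAbove, specPt]
    have hle := rankf_le w j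
    have h1 : 1 ≤ rankf w j := rankf_pos w j
    have hexp : (N + 1) - rankf w j = (N - rankf w j) + 1 := by omega
    rw [hexp, pow_succ]
    ring

lemma sum_insertNth (i₀ : Fin (N+1)) (w : Fin N → ℕ) :
    ∑ r, (i₀.insertNth 0 w) r = ∑ i, w i := by
  rw [Fin.sum_univ_succAbove _ i₀]
  simp

lemma insertNth_last_eq_snoc {α : Type*} (w : Fin N → α) (x : α) :
    (Fin.last N).insertNth x w = (Fin.snoc w x : Fin (N+1) → α) := by
  funext r
  induction r using Fin.lastCases with
  | last =>
    rw [Fin.snoc_last]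
    exact Fin.insertNth_apply_same _ _ _
  | cast i =>
    have h := congrFun (Fin.succAbove_last (n := N)) i
    rw [Fin.snoc_castSucc, ← h, Fin.insertNth_apply_succAbove]

def PhiOp {N : ℕ} (z : Fin (N+1) → ℕ) : Fin (N+1) → ℕ :=
  Fin.snoc (fun i : Fin N => z i.succ) (z 0 + 1)

def PsiOp {N : ℕ} (v : Fin (N+1) → ℕ) : Fin (N+1) → ℕ :=
  Fin.cons (v (Fin.last N) - 1) (fun i : Fin N => v i.castSucc)

lemma PhiOp_castSucc (z : Fin (N+1) → ℕ) (i : Fin N) : PhiOp z i.castSucc = z i.succ := by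
  simp [PhiOp]

lemma PhiOp_last (z : Fin (N+1) → ℕ) : PhiOp z (Fin.last N) = z 0 + 1 := by
  simp [PhiOp]

lemma PsiOp_zero (v : Fin (N+1) → ℕ) : PsiOp v 0 = v (Fin.last N) - 1 := by
  simp [PsiOp]

lemma PsiOp_succ (v : Fin (N+1) → ℕ) (i : Fin N) : PsiOp v i.succ = v i.castSucc := by
  simp [PsiOp]

lemma PhiOp_PsiOp (v : Fin (N+1) → ℕ) (h : 1 ≤ v (Fin.last N)) :
    PhiOp (PsiOp v) = v := by
  funext r
  induction r using Fin.lastCases with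
  | last =>
    rw [PhiOp_last, PsiOp_zero]
    omega
  | cast i =>
    rw [PhiOp_castSucc, PsiOp_succ]

lemma PhiOp_injective (z z' : Fin (N+1) → ℕ) (h : PhiOp z = PhiOp z') : z = z' := by
  funext r
  induction r using Fin.cases with
  | zero =>
    have := congrFun h (Fin.last N)
    rw [PhiOp_last, PhiOp_last] at this
    omega
  | succ i =>
    have := congrFun h i.castSucc
    rwa [PhiOp_castSucc, PhiOp_castSucc] at this

lemma sum_PhiOp (z : Fin (N+1) → ℕ) : ∑ r, PhiOp z r = (∑ r, z r) + 1 := by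
  rw [Fin.sum_univ_castSucc (f := PhiOp z)]
  conv_rhs => rw [Fin.sum_univ_succ (f := z)]
  simp only [PhiOp_castSucc, PhiOp_last]
  omega

lemma rankf_PhiOp_castSucc (z : Fin (N+1) → ℕ) (i : Fin N) :
    rankf (PhiOp z) i.castSucc = rankf z i.succ := by
  have h1 : ¬ (Fin.last N < i.castSucc) := not_lt.2 (Fin.castSucc_lt_last i).le
  have h2 : i.castSucc < Fin.last N := Fin.castSucc_lt_last i
  have h3 : (0 : Fin (N+1)) < i.succ := Fin.succ_pos i
  have h4 : ¬ (i.succ < (0 : Fin (N+1))) := Fin.not_lt_zero _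
  rw [rankf_eq_sum, rankf_eq_sum]
  rw [Fin.sum_univ_castSucc (f := fun k => if k < i.castSucc ∧ PhiOp z i.castSucc ≤ PhiOp z k then (1:ℕ) else 0),
    Fin.sum_univ_castSucc (f := fun k => if i.castSucc < k ∧ PhiOp z i.castSucc < PhiOp z k then (1:ℕ) else 0),
    Fin.sum_univ_succ (f := fun k => if k < i.succ ∧ z i.succ ≤ z k then (1:ℕ) else 0),
    Fin.sum_univ_succ (f := fun k => if i.succ < k ∧ z i.succ < z k then (1:ℕ) else 0)]
  simp only [PhiOp, Fin.snoc_castSucc, Fin.snoc_last, Fin.castSucc_lt_castSucc_iff,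
    Fin.succ_lt_succ_iff, h1, h2, h3, h4, false_and, if_false, true_and, and_true,
    Nat.lt_succ_iff, Fin.succ_pos, Fin.succ_lt_succ_iff]
  omega

lemma rankf_PhiOp_last (z : Fin (N+1) → ℕ) :
    rankf (PhiOp z) (Fin.last N) = rankf z 0 := by
  rw [rankf_eq_sum, rankf_eq_sum]
  rw [Fin.sum_univ_castSucc (f := fun k => if k < Fin.last N ∧ PhiOp z (Fin.last N) ≤ PhiOp z k then (1:ℕ) else 0),
    Fin.sum_univ_castSucc (f := fun k => if Fin.last N < k ∧ PhiOp z (Fin.last N) < PhiOp z k then (1:ℕ) else 0),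
    Fin.sum_univ_succ (f := fun k => if k < (0 : Fin (N+1)) ∧ z 0 ≤ z k then (1:ℕ) else 0),
    Fin.sum_univ_succ (f := fun k => if (0 : Fin (N+1)) < k ∧ z 0 < z k then (1:ℕ) else 0)]
  have h6 : ∀ k : Fin N, ¬ (Fin.last N < k.castSucc) := fun k => not_lt.2 (Fin.castSucc_lt_last k).le
  simp only [PhiOp, Fin.snoc_castSucc, Fin.snoc_last, Fin.castSucc_lt_last, lt_irrefl, h6,
    Fin.not_lt_zero, Fin.succ_pos, false_and, if_false, true_and, and_true,
    Nat.add_one_le_iff, Finset.sum_const_zero]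
  omega

lemma specPt_PhiOp_castSucc (z : Fin (N+1) → ℕ) (i : Fin N) :
    specPt (PhiOp z) i.castSucc = specPt z i.succ := by
  rw [specPt, specPt, rankf_PhiOp_castSucc, PhiOp_castSucc]

lemma specPt_PhiOp_last (z : Fin (N+1) → ℕ) :
    specPt (PhiOp z) (Fin.last N) = qk * specPt z 0 := by
  rw [specPt, specPt, rankf_PhiOp_last]
  rw [PhiOp_last, pow_succ]
  ring

end RankLemmas

/-! ### unisolvence of spectral points -/

lemma lemA : ∀ (d : ℕ), ∀ (p : ℕ), ∀ (N : ℕ), p ≤ N →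
    ∀ F : MvPolynomial (Fin N) Kqt,
    F.totalDegree + (N - p) ≤ d →
    (∀ z : Fin N → ℕ, (∑ i, z i) ≤ d → (∀ i : Fin N, p ≤ (i : ℕ) → 1 ≤ z i) →
      eval (specPt z) F = 0) →
    F = 0 := by
  intro d
  induction d using Nat.strong_induction_on with
  | _ d IHd =>
  intro p
  induction p with
  | zero =>
    intro N hpN F hdeg hvan
    rcases Nat.eq_zero_or_pos N with rfl | hN
    · obtain ⟨c, rfl⟩ := MvPolynomial.C_surjective (Fin 0) F
      have h0 := hvan (fun i => i.elim0) (by simp) (fun i => i.elim0)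
      rw [eval_C] at h0
      rw [h0, map_zero]
    · have hNd : N ≤ d := by omega
      set G := aeval (fun i : Fin N => (C qk * X i : MvPolynomial (Fin N) Kqt)) F with hG
      have hGdeg : G.totalDegree ≤ F.totalDegree := by
        refine totalDegree_aeval_le _ (fun i => ?_) F
        refine le_trans (totalDegree_mul _ _) ?_
        simp [totalDegree_X]
      have hGvan : ∀ w : Fin N → ℕ, (∑ i, w i) ≤ d - N →
          (∀ i : Fin N, N ≤ (i : ℕ) → 1 ≤ w i) → eval (specPt w) G = 0 := by
        intro w hw _
        rw [hG, eval_aeval]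
        have hcoords : (fun i => eval (specPt w) (C qk * X i)) = specPt (fun i => w i + 1) := by
          rw [specPt_add_one]
          funext i
          rw [map_mul, eval_C, eval_X]
        rw [hcoords]
        refine hvan _ ?_ (fun i _ => by omega)
        rw [sum_add_one]
        omega
      have hG0 : G = 0 := by
        refine IHd (d - N) (by omega) N N le_rfl G ?_ hGvan
        omega
      have hrec : aeval (fun i : Fin N => (C qk⁻¹ * X i : MvPolynomial (Fin N) Kqt)) G = F := by
        rw [hG, aeval_aeval]
        have hid : (fun i => aeval (fun i : Fin N => (C qk⁻¹ * X i : MvPolynomial (Fin N) Kqt))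
            ((C qk * X i : MvPolynomial (Fin N) Kqt))) = X := by
          funext i
          rw [map_mul, aeval_C, aeval_X, MvPolynomial.algebraMap_eq, ← mul_assoc, ← C_mul,
            mul_inv_cancel₀ qk_ne_zero, C_1, one_mul]
        rw [hid, aeval_X_left]
        rfl
      rw [← hrec, hG0, map_zero]
  | succ p' IHp =>
    intro N hpN F hdeg hvan
    obtain ⟨n, rfl⟩ : ∃ n, N = n + 1 := ⟨N - 1, by omega⟩
    have hp'n : p' ≤ n := by omega
    set i₀ : Fin (n+1) := ⟨p', by omega⟩ with hi₀
    set σm : Fin (n+1) → MvPolynomial (Fin n) Kqt :=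
      i₀.insertNth 1 (fun i => C tk * X i) with hσ
    set F₂ := aeval σm F with hF₂
    have hσdeg : ∀ r, (σm r).totalDegree ≤ 1 := by
      intro r
      rcases eq_or_ne r i₀ with rfl | hr
      · rw [hσ, Fin.insertNth_apply_same]
        simp
      · obtain ⟨j, rfl⟩ := Fin.exists_succAbove_eq hr
        rw [hσ, Fin.insertNth_apply_succAbove]
        refine le_trans (totalDegree_mul _ _) ?_
        simp [totalDegree_X]
    have hF₂deg : F₂.totalDegree ≤ F.totalDegree := totalDegree_aeval_le _ hσdeg F
    have hF₂van : ∀ w : Fin n → ℕ, (∑ i, w i) ≤ d →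
        (∀ i : Fin n, p' ≤ (i : ℕ) → 1 ≤ w i) → eval (specPt w) F₂ = 0 := by
      intro w hw hwpos
      have hpos : ∀ i : Fin n, i₀ ≤ i.castSucc → 1 ≤ w i := by
        intro i hi
        refine hwpos i ?_
        have := Fin.le_def.1 hi
        simpa [hi₀] using this
      rw [hF₂, eval_aeval]
      have hcoords : (fun r => eval (specPt w) (σm r)) = specPt (i₀.insertNth 0 w) := by
        rw [specPt_insertNth _ _ hpos]
        funext r
        rcases eq_or_ne r i₀ with rfl | hr
        · rw [hσ, Fin.insertNth_apply_same, Fin.insertNth_apply_same, map_one]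
        · obtain ⟨j, rfl⟩ := Fin.exists_succAbove_eq hr
          rw [hσ, Fin.insertNth_apply_succAbove, Fin.insertNth_apply_succAbove,
            map_mul, eval_C, eval_X]
      rw [hcoords]
      refine hvan _ (by rw [sum_insertNth]; exact hw) ?_
      intro r hr
      have hri₀ : i₀ < r := by
        rw [Fin.lt_def]
        simp only [hi₀]
        omega
      obtain ⟨j, rfl⟩ := Fin.exists_succAbove_eq (ne_of_gt hri₀)
      rw [Fin.insertNth_apply_succAbove]
      exact hpos j ((lt_succAbove_iff' i₀ j).1 hri₀)
    have hF₂0 : F₂ = 0 := by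
      refine IHp n hp'n F₂ ?_ hF₂van
      have : (n + 1) - (p' + 1) = n - p' := by omega
      rw [this] at hdeg
      omega
    have hupd : aeval (Function.update (X : Fin (n+1) → MvPolynomial (Fin (n+1)) Kqt) i₀ (C 1)) F = 0 := by
      have hcomp : aeval (fun i : Fin n =>
          (C tk⁻¹ * X (i₀.succAbove i) : MvPolynomial (Fin (n+1)) Kqt)) F₂
          = aeval (Function.update (X : Fin (n+1) → MvPolynomial (Fin (n+1)) Kqt) i₀ (C 1)) F := by
        rw [hF₂, aeval_aeval]
        have hfun : (fun i => aeval (fun i : Fin n =>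
            (C tk⁻¹ * X (i₀.succAbove i) : MvPolynomial (Fin (n+1)) Kqt)) (σm i))
            = Function.update (X : Fin (n+1) → MvPolynomial (Fin (n+1)) Kqt) i₀ (C 1) := by
          funext r
          rcases eq_or_ne r i₀ with rfl | hr
          · rw [hσ, Fin.insertNth_apply_same, map_one, Function.update_self, C_1]
          · obtain ⟨j, rfl⟩ := Fin.exists_succAbove_eq hr
            rw [hσ, Fin.insertNth_apply_succAbove, map_mul, aeval_C, aeval_X,
              MvPolynomial.algebraMap_eq, ← mul_assoc, ← C_mul,
              mul_inv_cancel₀ tk_ne_zero, C_1, one_mul,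
              Function.update_of_ne (Fin.succAbove_ne i₀ j)]
        rw [hfun]
      rw [← hcomp, hF₂0, map_zero]
    obtain ⟨H, hH⟩ := X_sub_C_dvd F i₀ 1 hupd
    rcases eq_or_ne H 0 with rfl | hHne
    · rw [hH, mul_zero]
    · have hHdeg := totalDegree_lin_mul i₀ 1 H hHne
      rw [← hH] at hHdeg
      have hHvan : ∀ z : Fin (n+1) → ℕ, (∑ i, z i) ≤ d →
          (∀ i : Fin (n+1), p' ≤ (i : ℕ) → 1 ≤ z i) → eval (specPt z) H = 0 := by
        intro z hz hzpos
        have h0 := hvan z hz (fun i hi => hzpos i (by omega))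
        rw [hH, map_mul] at h0
        have hne : eval (specPt z) (X i₀ - C 1) ≠ 0 := by
          rw [map_sub, eval_X, eval_C]
          have h1 : 1 ≤ z i₀ := hzpos i₀ (by simp [hi₀])
          exact sub_ne_zero.2 (specPt_ne_one z i₀ h1)
        exact (mul_eq_zero.1 h0).resolve_left hne
      have hH0 : H = 0 := by
        refine IHp (n+1) (by omega) H ?_ hHvan
        omega
      rw [hH, hH0, mul_zero]

/-! ### SM: definitions and bookkeeping -/

def chiT {N : ℕ} (T : Finset (Fin N)) (p : Fin N) : ℕ :=
  N - 1 - (p : ℕ) - (T.filter fun r => p < r).card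

def phiT {N : ℕ} (T : Finset (Fin N)) : Fin N → MvPolynomial (Fin N) Kqt :=
  fun p => if p ∈ T then X p else C (tk ^ chiT T p)

def gP {N : ℕ} (T : Finset (Fin N)) (v : Fin N → ℕ) (p : Fin N) : MvPolynomial (Fin N) Kqt :=
  if v p = 0 then 1 else
    (X p - C (tk ^ chiT T p)) *
      ∏ s ∈ Finset.Icc 1 (v p - 1), (X p - C (tk ^ (N - T.card) * qk ^ s))

lemma card_gt_le {n : ℕ} (S : Finset (Fin n)) (p : Fin n) :
    (S.filter fun r => p < r).card + (p : ℕ) + 1 ≤ n := by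
  have h1 : (S.filter fun r => p < r) ⊆ Finset.Ioi p := by
    intro r hr
    simp only [Finset.mem_Ioi]
    exact (Finset.mem_filter.1 hr).2
  have h2 := Finset.card_le_card h1
  rw [Fin.card_Ioi] at h2
  have := p.isLt
  omega

lemma eq_C_of_totalDegree_zero {n : ℕ} (F : MvPolynomial (Fin n) Kqt)
    (h : F.totalDegree = 0) : F = C (coeff 0 F) := by
  ext m
  rcases eq_or_ne m 0 with rfl | hm
  · simp
  · rw [coeff_C, if_neg (Ne.symm hm)]
    refine coeff_eq_zero_of_totalDegree_lt ?_
    rw [h]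
    obtain ⟨i, hi⟩ := Finsupp.ne_iff.1 hm
    have hmem : i ∈ m.support := Finsupp.mem_support_iff.2 (by simpa using hi)
    have h2 : m i ≤ ∑ x ∈ m.support, m x := by
      simpa using Finset.single_le_sum (f := fun j => m j) (fun _ _ => Nat.zero_le _) hmem
    have hipos : 1 ≤ m i := by
      have : m i ≠ 0 := by simpa using hi
      omega
    omega

lemma prod_shift {M : Type*} [CommMonoid M] (f : ℕ → M) (w : ℕ) (hw : 1 ≤ w) :
    f 1 * ∏ s ∈ Finset.Icc 1 (w-1), f (s+1) = ∏ s ∈ Finset.Icc 1 w, f s := by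
  have h1 : Finset.Icc 2 w = (Finset.Icc 1 (w-1)).image (· + 1) := by
    ext x
    simp only [Finset.mem_Icc, Finset.mem_image]
    constructor
    · intro hx; exact ⟨x - 1, by omega, by omega⟩
    · rintro ⟨y, hy, rfl⟩; omega
  have h2 : Finset.Icc 1 w = insert 1 (Finset.Icc 2 w) := by
    ext x
    simp only [Finset.mem_insert, Finset.mem_Icc]
    omega
  rw [h2, Finset.prod_insert (by simp), h1,
    Finset.prod_image (by intro x _ y _ h; simp only at h; omega)]

section Strip
variable {n : ℕ} (T : Finset (Fin (n+1)))

/-- untracked positions reindexed -/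
def stripT (T : Finset (Fin (n+1))) : Finset (Fin n) :=
  Finset.univ.filter (fun p : Fin n => p.castSucc ∈ T)

lemma mem_stripT {p : Fin n} : p ∈ stripT T ↔ p.castSucc ∈ T := by
  simp [stripT]

lemma stripT_image (hlast : Fin.last n ∉ T) :
    (stripT T).image Fin.castSucc = T := by
  ext r
  simp only [Finset.mem_image]
  constructor
  · rintro ⟨p, hp, rfl⟩
    exact (mem_stripT T).1 hp
  · intro hr
    have hne : r ≠ Fin.last n := by rintro rfl; exact hlast hr
    refine ⟨r.castPred hne, ?_, Fin.castSucc_castPred _ _⟩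
    rw [mem_stripT, Fin.castSucc_castPred]
    exact hr

lemma stripT_card (hlast : Fin.last n ∉ T) : (stripT T).card = T.card := by
  have h := Finset.card_image_of_injective (stripT T) (Fin.castSucc_injective n)
  rw [stripT_image T hlast] at h
  omega

lemma chiT_last : chiT T (Fin.last n) = 0 := by
  rw [chiT]
  have : (T.filter fun r => Fin.last n < r) = ∅ := by
    refine Finset.filter_false_of_mem ?_
    intro r _
    exact not_lt.2 (Fin.le_last r)
  rw [this]
  simp

lemma chiT_strip (hlast : Fin.last n ∉ T) (p : Fin n) :
    chiT T p.castSucc = chiT (stripT T) p + 1 := by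
  have himg : (T.filter fun r => p.castSucc < r)
      = ((stripT T).filter fun r => p < r).image Fin.castSucc := by
    ext r
    simp only [Finset.mem_filter, Finset.mem_image]
    constructor
    · rintro ⟨hr, hlt⟩
      have hne : r ≠ Fin.last n := by rintro rfl; exact hlast hr
      refine ⟨r.castPred hne, ⟨?_, ?_⟩, Fin.castSucc_castPred _ _⟩
      · rw [mem_stripT, Fin.castSucc_castPred]; exact hr
      · rw [← Fin.castSucc_lt_castSucc_iff, Fin.castSucc_castPred]; exact hlt
    · rintro ⟨j, ⟨hj, hlt⟩, rfl⟩
      exact ⟨(mem_stripT T).1 hj, Fin.castSucc_lt_castSucc_iff.2 hlt⟩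
  rw [chiT, chiT, himg, Finset.card_image_of_injective _ (Fin.castSucc_injective n)]
  have hb := card_gt_le (stripT T) p
  have := p.isLt
  simp only [Fin.coe_castSucc]
  omega
end Strip

section Rot
variable {n : ℕ} (T : Finset (Fin (n+1)))

/-- rotated tracked set -/
def rotT (T : Finset (Fin (n+1))) : Finset (Fin (n+1)) :=
  insert 0 ((stripT T).image Fin.succ)

lemma zero_mem_rotT : (0 : Fin (n+1)) ∈ rotT T := Finset.mem_insert_self _ _

lemma succ_mem_rotT {p : Fin n} : p.succ ∈ rotT T ↔ p.castSucc ∈ T := by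
  rw [rotT, Finset.mem_insert]
  constructor
  · rintro (h | h)
    · exact absurd h.symm (Fin.succ_ne_zero p).symm
    · obtain ⟨j, hj, hjq⟩ := Finset.mem_image.1 h
      have : j = p := Fin.succ_injective n hjq
      subst this
      exact (mem_stripT T).1 hj
  · intro h
    exact Or.inr (Finset.mem_image.2 ⟨p, (mem_stripT T).2 h, rfl⟩)

lemma rotT_card (hlast : Fin.last n ∈ T) : (rotT T).card = T.card := by
  have h1 : (rotT T).card = (stripT T).card + 1 := by
    rw [rotT, Finset.card_insert_of_notMem, Finset.card_image_of_injective _ (Fin.succ_injective n)]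
    intro h
    obtain ⟨j, -, hj⟩ := Finset.mem_image.1 h
    exact (Fin.succ_ne_zero j) hj
  have h2 : T = insert (Fin.last n) ((stripT T).image Fin.castSucc) := by
    ext r
    simp only [Finset.mem_insert, Finset.mem_image]
    constructor
    · intro hr
      rcases eq_or_ne r (Fin.last n) with rfl | hne
      · exact Or.inl rfl
      · exact Or.inr ⟨r.castPred hne, by rw [mem_stripT, Fin.castSucc_castPred]; exact hr,
          Fin.castSucc_castPred _ _⟩
    · rintro (rfl | ⟨j, hj, rfl⟩)
      · exact hlast
      · exact (mem_stripT T).1 hj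
  have h3 : T.card = (stripT T).card + 1 := by
    conv_lhs => rw [h2]
    rw [Finset.card_insert_of_notMem, Finset.card_image_of_injective _ (Fin.castSucc_injective n)]
    intro h
    obtain ⟨j, -, hj⟩ := Finset.mem_image.1 h
    exact absurd hj (Fin.castSucc_lt_last j).ne
  omega

lemma chiT_rot (hlast : Fin.last n ∈ T) (p : Fin n) :
    chiT (rotT T) p.succ = chiT T p.castSucc := by
  have himgT : (T.filter fun r => p.castSucc < r)
      = insert (Fin.last n) (((stripT T).filter fun r => p < r).image Fin.castSucc) := by
    ext r
    simp only [Finset.mem_filter, Finset.mem_insert, Finset.mem_image]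
    constructor
    · rintro ⟨hr, hlt⟩
      rcases eq_or_ne r (Fin.last n) with rfl | hne
      · exact Or.inl rfl
      · refine Or.inr ⟨r.castPred hne, ⟨?_, ?_⟩, Fin.castSucc_castPred _ _⟩
        · rw [mem_stripT, Fin.castSucc_castPred]; exact hr
        · rw [← Fin.castSucc_lt_castSucc_iff, Fin.castSucc_castPred]; exact hlt
    · rintro (rfl | ⟨j, ⟨hj, hlt⟩, rfl⟩)
      · exact ⟨hlast, Fin.castSucc_lt_last p⟩
      · exact ⟨(mem_stripT T).1 hj, Fin.castSucc_lt_castSucc_iff.2 hlt⟩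
  have himgR : ((rotT T).filter fun r => p.succ < r)
      = ((stripT T).filter fun r => p < r).image Fin.succ := by
    ext r
    simp only [Finset.mem_filter, Finset.mem_image]
    constructor
    · rintro ⟨hr, hlt⟩
      rw [rotT, Finset.mem_insert] at hr
      rcases hr with rfl | hr
      · exact absurd hlt (Fin.not_lt_zero _)
      · obtain ⟨j, hj, rfl⟩ := Finset.mem_image.1 hr
        exact ⟨j, ⟨hj, Fin.succ_lt_succ_iff.1 hlt⟩, rfl⟩
    · rintro ⟨j, ⟨hj, hlt⟩, rfl⟩
      exact ⟨(succ_mem_rotT T).2 ((mem_stripT T).1 hj), Fin.succ_lt_succ_iff.2 hlt⟩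
  rw [chiT, chiT, himgT, himgR]
  rw [Finset.card_insert_of_notMem (by
    intro h
    obtain ⟨j, -, hj⟩ := Finset.mem_image.1 h
    exact absurd hj (Fin.castSucc_lt_last j).ne)]
  rw [Finset.card_image_of_injective _ (Fin.castSucc_injective n),
    Finset.card_image_of_injective _ (Fin.succ_injective n)]
  have hb := card_gt_le (stripT T) p
  have := p.isLt
  simp only [Fin.coe_castSucc, Fin.val_succ]
  omega

lemma chiT_rot_zero (hlast : Fin.last n ∈ T) :
    chiT (rotT T) 0 = (n + 1) - T.card := by
  have himg : ((rotT T).filter fun r => (0:Fin (n+1)) < r) = (stripT T).image Fin.succ := by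
    ext r
    simp only [Finset.mem_filter]
    constructor
    · rintro ⟨hr, hlt⟩
      rw [rotT, Finset.mem_insert] at hr
      rcases hr with rfl | hr
      · exact absurd hlt (lt_irrefl _)
      · exact hr
    · intro hr
      obtain ⟨j, hj, rfl⟩ := Finset.mem_image.1 hr
      exact ⟨(succ_mem_rotT T).2 ((mem_stripT T).1 hj), Fin.succ_pos j⟩
  have hcardT := rotT_card T hlast
  have h1 : (rotT T).card = (stripT T).card + 1 := by
    rw [rotT, Finset.card_insert_of_notMem, Finset.card_image_of_injective _ (Fin.succ_injective n)]
    intro h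
    obtain ⟨j, -, hj⟩ := Finset.mem_image.1 h
    exact (Fin.succ_ne_zero j) hj
  have hTle : T.card ≤ n + 1 := by
    have := Finset.card_le_univ T
    simpa using this
  rw [chiT, himg, Finset.card_image_of_injective _ (Fin.succ_injective n)]
  simp only [Fin.val_zero]
  omega
end Rot

section Transport
variable {n : ℕ}

def LamMap (n : ℕ) : Fin n → MvPolynomial (Fin (n+1)) Kqt :=
  fun p => C tk⁻¹ * X p.castSucc

def ThetaMap (n : ℕ) : Fin (n+1) → MvPolynomial (Fin (n+1)) Kqt :=
  Fin.cons (C qk⁻¹ * X (Fin.last n)) (fun i : Fin n => X i.castSucc)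

lemma ThetaMap_zero : ThetaMap n 0 = C qk⁻¹ * X (Fin.last n) := by
  simp [ThetaMap]

lemma ThetaMap_succ (i : Fin n) : ThetaMap n i.succ = X i.castSucc := by
  simp [ThetaMap]

lemma card_le_of_not_last {T : Finset (Fin (n+1))} (hlast : Fin.last n ∉ T) :
    T.card ≤ n := by
  have hsub : T ⊆ Finset.univ.erase (Fin.last n) := by
    intro r hr
    refine Finset.mem_erase.2 ⟨?_, Finset.mem_univ _⟩
    rintro rfl; exact hlast hr
  have := Finset.card_le_card hsub
  rw [Finset.card_erase_of_mem (Finset.mem_univ _)] at this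
  simpa using this

lemma Lam_gP (T : Finset (Fin (n+1))) (hlast : Fin.last n ∉ T)
    (v : Fin (n+1) → ℕ) (p : Fin n) :
    aeval (LamMap n) (gP (stripT T) (fun i => v i.castSucc) p)
      = C (tk⁻¹ ^ v p.castSucc) * gP T v p.castSucc := by
  rcases eq_or_ne (v p.castSucc) 0 with hv | hv
  · rw [gP, gP, if_pos hv, if_pos hv, map_one, hv, pow_zero, C_1, one_mul]
  · rw [gP, gP, if_neg hv, if_neg hv, map_mul, map_prod]
    have hlin : ∀ c : Kqt, aeval (LamMap n) (X p - C c)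
        = C tk⁻¹ * (X p.castSucc - C (tk * c)) := by
      intro c
      rw [map_sub, aeval_X, aeval_C, MvPolynomial.algebraMap_eq, LamMap,
        mul_sub, ← C_mul, ← mul_assoc, inv_mul_cancel₀ tk_ne_zero, one_mul]
    rw [hlin]
    rw [Finset.prod_congr rfl (fun s _ => hlin _)]
    rw [Finset.prod_mul_distrib, Finset.prod_const, Nat.card_Icc]
    have hroot0 : tk * tk ^ chiT (stripT T) p = tk ^ chiT T p.castSucc := by
      rw [chiT_strip T hlast p, pow_succ]
      ring
    have hκ : (stripT T).card = T.card := stripT_card T hlast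
    have hκn : T.card ≤ n := card_le_of_not_last hlast
    have hroots : ∀ s : ℕ, tk * (tk ^ (n - (stripT T).card) * qk ^ s)
        = tk ^ ((n+1) - T.card) * qk ^ s := by
      intro s
      rw [hκ]
      have : (n + 1) - T.card = (n - T.card) + 1 := by omega
      rw [this, pow_succ]
      ring
    rw [hroot0]
    rw [Finset.prod_congr rfl (fun s _ => by rw [hroots s])]
    rw [← C_pow]
    have hw : 1 ≤ v p.castSucc := by omega
    have hpow : tk⁻¹ * tk⁻¹ ^ (v p.castSucc - 1 + 1 - 1) = tk⁻¹ ^ (v p.castSucc) := by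
      have : v p.castSucc - 1 + 1 - 1 = v p.castSucc - 1 := by omega
      rw [this, ← pow_succ']
      congr 1
      omega
    rw [← hpow, C_mul]
    ring

lemma Theta_gP_succ (T : Finset (Fin (n+1))) (hlast : Fin.last n ∈ T)
    (v : Fin (n+1) → ℕ) (i : Fin n) :
    aeval (ThetaMap n) (gP (rotT T) (PsiOp v) i.succ) = gP T v i.castSucc := by
  have hval : PsiOp v i.succ = v i.castSucc := PsiOp_succ v i
  rcases eq_or_ne (v i.castSucc) 0 with hv | hv
  · rw [gP, gP, if_pos (by rw [hval]; exact hv), if_pos hv, map_one]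
  · rw [gP, gP, if_neg (by rw [hval]; exact hv), if_neg hv, map_mul, map_prod]
    have hlin : ∀ c : Kqt, aeval (ThetaMap n) (X i.succ - C c) = X i.castSucc - C c := by
      intro c
      rw [map_sub, aeval_X, aeval_C, MvPolynomial.algebraMap_eq, ThetaMap_succ]
    rw [hlin, Finset.prod_congr rfl (fun s _ => hlin _)]
    rw [hval, chiT_rot T hlast i, rotT_card T hlast]

lemma Theta_gP_zero (T : Finset (Fin (n+1))) (hlast : Fin.last n ∈ T)
    (v : Fin (n+1) → ℕ) (hv1 : 1 ≤ v (Fin.last n)) :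
    (X (Fin.last n) - C 1) * aeval (ThetaMap n) (gP (rotT T) (PsiOp v) 0)
      = C (qk⁻¹ ^ (v (Fin.last n) - 1)) * gP T v (Fin.last n) := by
  have hval : PsiOp v 0 = v (Fin.last n) - 1 := PsiOp_zero v
  have hvlast : v (Fin.last n) ≠ 0 := by omega
  rcases eq_or_ne (v (Fin.last n) - 1) 0 with hw | hw
  · rw [gP, gP, if_pos (by rw [hval]; exact hw), if_neg hvlast]
    rw [show (aeval (ThetaMap n)) (1 : MvPolynomial (Fin (n+1)) Kqt) = 1 from map_one _, mul_one]
    rw [hw, chiT_last, Finset.Icc_eq_empty (by omega)]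
    simp
  · rw [gP, gP, if_neg (by rw [hval]; exact hw), if_neg hvlast, map_mul, map_prod]
    have hlin : ∀ c : Kqt, aeval (ThetaMap n) (X 0 - C c)
        = C qk⁻¹ * (X (Fin.last n) - C (qk * c)) := by
      intro c
      rw [map_sub, aeval_X, aeval_C, MvPolynomial.algebraMap_eq, ThetaMap_zero,
        mul_sub, ← C_mul, ← mul_assoc, inv_mul_cancel₀ qk_ne_zero, one_mul]
    rw [hlin, Finset.prod_congr rfl (fun s _ => hlin _)]
    rw [Finset.prod_mul_distrib, Finset.prod_const, Nat.card_Icc]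
    rw [chiT_rot_zero T hlast, rotT_card T hlast, hval]
    set w := v (Fin.last n) - 1 with hwdef
    set e := (n + 1) - T.card with hedef
    -- LHS: (X - C 1) * (C qk⁻¹ * (X - C (qk * tk ^ e)) * (C qk⁻¹ ^ (w - 1 + 1 - 1) * ∏ ...))
    have hcard : w - 1 + 1 - 1 = w - 1 := by omega
    rw [hcard]
    have hshift : (X (Fin.last n) - C (qk * tk ^ e)) *
        ∏ s ∈ Finset.Icc 1 (w - 1), (X (Fin.last n) - C (qk * (tk ^ e * qk ^ s)))
        = ∏ s ∈ Finset.Icc 1 w, (X (Fin.last n) - C (tk ^ e * qk ^ s)) := by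
      have h1 : X (Fin.last n) - C (qk * tk ^ e)
          = X (Fin.last n) - C (tk ^ e * qk ^ 1) := by
        rw [pow_one, mul_comm]
      have h2 : ∀ s, X (Fin.last n) - C (qk * (tk ^ e * qk ^ s))
          = X (Fin.last n) - C (tk ^ e * qk ^ (s+1)) := by
        intro s
        rw [pow_succ]
        ring_nf
      rw [h1, Finset.prod_congr rfl (fun s _ => h2 s)]
      exact prod_shift (fun s => X (Fin.last n) - C (tk ^ e * qk ^ s)) w (by omega)
    have hpowq : C (qk⁻¹ ^ w) = (C qk⁻¹ : MvPolynomial (Fin (n+1)) Kqt) * C qk⁻¹ ^ (w - 1) := by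
      rw [← C_pow, ← C_mul, ← pow_succ']
      congr 2
      omega
    rw [chiT_last, pow_zero, ← hshift, hpowq]
    ring
end Transport

/-! ### the main specialization lemma -/

lemma sum_PsiOp {n : ℕ} (v : Fin (n+1) → ℕ) (h : 1 ≤ v (Fin.last n)) :
    ∑ r, PsiOp v r = (∑ r, v r) - 1 := by
  rw [Fin.sum_univ_succ (f := PsiOp v)]
  conv_rhs => rw [Fin.sum_univ_castSucc (f := v)]
  simp only [PsiOp_zero, PsiOp_succ]
  omega

lemma SM : ∀ (Mea : ℕ) (N : ℕ) (v : Fin N → ℕ) (T : Finset (Fin N)) (a j : ℕ),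
    2 * (∑ i, v i) + N ≤ Mea →
    (∀ p : Fin N, (p : ℕ) < a → p ∈ T ∧ v p = j) →
    (∀ p : Fin N, a ≤ (p : ℕ) → (p ∈ T → v p = j + 1) ∧ (p ∉ T → v p = 0)) →
    ∀ F : MvPolynomial (Fin N) Kqt, F.totalDegree ≤ ∑ i, v i →
    (∀ z : Fin N → ℕ, (∑ i, z i) ≤ ∑ i, v i → z ≠ v → eval (specPt z) F = 0) →
    ∃ c : Kqt, aeval (phiT T) F = C c * ∏ p, gP T v p := by
  intro Mea
  induction Mea using Nat.strong_induction_on with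
  | _ Mea IH =>
  intro N v T a j hMea hINV1 hINV2 F hdeg hvan
  by_cases hv0 : ∀ p, v p = 0
  · -- base case M1
    have hsum0 : ∑ i, v i = 0 := Finset.sum_eq_zero (fun p _ => hv0 p)
    rw [hsum0] at hdeg
    have hF : F = C (coeff 0 F) := eq_C_of_totalDegree_zero F (Nat.le_zero.1 hdeg)
    refine ⟨coeff 0 F, ?_⟩
    conv_lhs => rw [hF]
    rw [aeval_C, MvPolynomial.algebraMap_eq]
    rw [Finset.prod_congr rfl (fun p _ => by rw [gP, if_pos (hv0 p)]),
      Finset.prod_const_one, mul_one]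
  · obtain ⟨n, rfl⟩ : ∃ n, N = n + 1 := by
      rcases N with _ | n
      · exact absurd (fun p => p.elim0) hv0
      · exact ⟨n, rfl⟩
    by_cases hlast : Fin.last n ∈ T
    · -- case M3 : rotation
      have hvlast1 : 1 ≤ v (Fin.last n) := by
        rcases lt_or_ge ((Fin.last n : ℕ)) a with h | h
        · have hj := (hINV1 _ h).2
          by_contra hcon
          have hj0 : j = 0 := by omega
          apply hv0
          intro p
          rcases lt_or_ge ((p : ℕ)) a with hp | hp
          · rw [(hINV1 p hp).2, hj0]
          · exfalso
            have h1 : (Fin.last n : ℕ) = n := rfl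
            have := p.isLt
            omega
        · rw [(hINV2 _ h).1 hlast]
          omega
      rcases eq_or_ne F 0 with rfl | hFne
      · exact ⟨0, by rw [map_zero, C_0, zero_mul]⟩
      set σm : Fin (n+1) → MvPolynomial (Fin n) Kqt :=
        (Fin.last n).insertNth 1 (fun i => C tk * X i) with hσ
      have hσdeg : ∀ r, (σm r).totalDegree ≤ 1 := by
        intro r
        rcases eq_or_ne r (Fin.last n) with rfl | hr
        · rw [hσ, Fin.insertNth_apply_same]; simp
        · obtain ⟨i, rfl⟩ := Fin.exists_succAbove_eq hr
          rw [hσ, Fin.insertNth_apply_succAbove]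
          refine le_trans (totalDegree_mul _ _) ?_
          simp [totalDegree_X]
      have hcoordsgen : ∀ w : Fin n → ℕ,
          (fun r => eval (specPt w) (σm r)) = specPt ((Fin.last n).insertNth 0 w) := by
        intro w
        rw [specPt_insertNth _ _ (fun i hi => absurd hi (not_le.2 (Fin.castSucc_lt_last i)))]
        funext r
        rcases eq_or_ne r (Fin.last n) with rfl | hr
        · rw [hσ, Fin.insertNth_apply_same, Fin.insertNth_apply_same, map_one]
        · obtain ⟨i, rfl⟩ := Fin.exists_succAbove_eq hr
          rw [hσ, Fin.insertNth_apply_succAbove, Fin.insertNth_apply_succAbove,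
            map_mul, eval_C, eval_X]
      have hF₀ : aeval σm F = 0 := by
        refine lemA (∑ i, v i) n n le_rfl _ ?_ ?_
        · have h1 : (aeval σm F).totalDegree ≤ F.totalDegree := totalDegree_aeval_le _ hσdeg F
          omega
        · intro w hw _
          rw [eval_aeval, hcoordsgen w]
          refine hvan _ (by rw [sum_insertNth]; exact hw) ?_
          intro heq
          have h1 := congrFun heq (Fin.last n)
          rw [Fin.insertNth_apply_same] at h1
          omega
      have hupd : aeval (Function.update (X : Fin (n+1) → MvPolynomial (Fin (n+1)) Kqt)
          (Fin.last n) (C 1)) F = 0 := by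
        have hcomp : aeval (fun i : Fin n => (C tk⁻¹ * X i.castSucc :
            MvPolynomial (Fin (n+1)) Kqt)) (aeval σm F)
            = aeval (Function.update (X : Fin (n+1) → MvPolynomial (Fin (n+1)) Kqt)
              (Fin.last n) (C 1)) F := by
          rw [aeval_aeval]
          have hfun : (fun r => aeval (fun i : Fin n => (C tk⁻¹ * X i.castSucc :
              MvPolynomial (Fin (n+1)) Kqt)) (σm r))
              = Function.update (X : Fin (n+1) → MvPolynomial (Fin (n+1)) Kqt)
                (Fin.last n) (C 1) := by
            funext r
            rcases eq_or_ne r (Fin.last n) with rfl | hr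
            · rw [hσ, Fin.insertNth_apply_same, map_one, Function.update_self, C_1]
            · obtain ⟨i, rfl⟩ := Fin.exists_succAbove_eq hr
              rw [hσ, Fin.insertNth_apply_succAbove, map_mul, aeval_C, aeval_X,
                MvPolynomial.algebraMap_eq, ← mul_assoc, ← C_mul,
                mul_inv_cancel₀ tk_ne_zero, C_1, one_mul,
                Function.update_of_ne (Fin.succAbove_ne (Fin.last n) i)]
              rw [congrFun (Fin.succAbove_last (n := n)) i]
          rw [hfun]
        rw [← hcomp, hF₀, map_zero]
      obtain ⟨F₁, hH⟩ := X_sub_C_dvd F (Fin.last n) 1 hupd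
      have hF₁ne : F₁ ≠ 0 := by
        rintro rfl
        rw [mul_zero] at hH
        exact hFne hH
      have hdegF₁ : F₁.totalDegree + 1 ≤ ∑ i, v i := by
        have := totalDegree_lin_mul (Fin.last n) 1 F₁ hF₁ne
        rw [← hH] at this
        omega
      set snocmap : Fin (n+1) → MvPolynomial (Fin (n+1)) Kqt :=
        Fin.snoc (fun i : Fin n => X i.succ) (C qk * X 0) with hsnoc
      set G := aeval snocmap F₁ with hG
      set v' := PsiOp v with hv'
      have hsumv' : ∑ r, v' r = (∑ r, v r) - 1 := sum_PsiOp v hvlast1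
      have hsumvpos : 1 ≤ ∑ r, v r := by
        have h1 : v (Fin.last n) ≤ ∑ r, v r := by
          simpa using Finset.single_le_sum (f := fun r => v r)
            (fun _ _ => Nat.zero_le _) (Finset.mem_univ (Fin.last n))
        omega
      have hGdeg : G.totalDegree ≤ ∑ r, v' r := by
        have h1 : G.totalDegree ≤ F₁.totalDegree := by
          refine totalDegree_aeval_le _ ?_ F₁
          intro r
          induction r using Fin.lastCases with
          | last =>
            rw [hsnoc, Fin.snoc_last]
            refine le_trans (totalDegree_mul _ _) ?_
            simp [totalDegree_X]
          | cast i =>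
            rw [hsnoc, Fin.snoc_castSucc]
            simp [totalDegree_X]
        omega
      have hGvan : ∀ z : Fin (n+1) → ℕ, (∑ r, z r) ≤ ∑ r, v' r → z ≠ v' →
          eval (specPt z) G = 0 := by
        intro z hz hzne
        rw [hG, eval_aeval]
        have hcoords : (fun r => eval (specPt z) (snocmap r)) = specPt (PhiOp z) := by
          funext r
          induction r using Fin.lastCases with
          | last => rw [hsnoc, Fin.snoc_last, map_mul, eval_C, eval_X, specPt_PhiOp_last]
          | cast i => rw [hsnoc, Fin.snoc_castSucc, eval_X, specPt_PhiOp_castSucc]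
        rw [hcoords]
        have h0 : eval (specPt (PhiOp z)) F = 0 := by
          refine hvan _ ?_ ?_
          · rw [sum_PhiOp]
            omega
          · intro heq
            apply hzne
            have h1 : PhiOp z = PhiOp (PsiOp v) := by
              rw [heq, PhiOp_PsiOp v hvlast1]
            rw [hv']
            exact PhiOp_injective _ _ h1
        rw [hH, map_mul] at h0
        have hne : eval (specPt (PhiOp z)) (X (Fin.last n) - C 1) ≠ 0 := by
          rw [map_sub, eval_X, eval_C]
          refine sub_ne_zero.2 (specPt_ne_one _ _ ?_)
          rw [PhiOp_last]
          omega
        exact (mul_eq_zero.1 h0).resolve_left hne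
      -- new invariant data
      have hnewinv : ∃ a' j',
          (∀ p : Fin (n+1), (p : ℕ) < a' → p ∈ rotT T ∧ v' p = j') ∧
          (∀ p : Fin (n+1), a' ≤ (p : ℕ) →
            (p ∈ rotT T → v' p = j' + 1) ∧ (p ∉ rotT T → v' p = 0)) := by
        rcases le_or_gt a n with han | han
        · -- a' = a+1, j' = j
          have hvlastval : v (Fin.last n) = j + 1 :=
            (hINV2 (Fin.last n) (by simpa using han)).1 hlast
          refine ⟨a + 1, j, ?_, ?_⟩
          · intro p
            induction p using Fin.cases with
            | zero =>
              intro _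
              refine ⟨zero_mem_rotT T, ?_⟩
              rw [hv', PsiOp_zero, hvlastval]
              omega
            | succ i =>
              intro hp
              have hi : (i : ℕ) < a := by simpa using hp
              have h1 := hINV1 i.castSucc (by simpa using hi)
              refine ⟨(succ_mem_rotT T).2 h1.1, ?_⟩
              rw [hv', PsiOp_succ]
              exact h1.2
          · intro p
            induction p using Fin.cases with
            | zero =>
              intro hp
              exfalso
              simp only [Fin.val_zero] at hp
              omega
            | succ i =>
              intro hp
              have hi : a ≤ (i : ℕ) := by simpa using hp
              have h1 := hINV2 i.castSucc (by simpa using hi)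
              constructor
              · intro hmem
                rw [hv', PsiOp_succ]
                exact h1.1 ((succ_mem_rotT T).1 hmem)
              · intro hmem
                rw [hv', PsiOp_succ]
                exact h1.2 (fun hc => hmem ((succ_mem_rotT T).2 hc))
        · -- full case : a' = 1, j' = j - 1
          have hvlastval : v (Fin.last n) = j := by
            refine (hINV1 (Fin.last n) ?_).2
            simpa using han
          have hj1 : 1 ≤ j := by omega
          refine ⟨1, j - 1, ?_, ?_⟩
          · intro p
            induction p using Fin.cases with
            | zero =>
              intro _
              refine ⟨zero_mem_rotT T, ?_⟩
              rw [hv', PsiOp_zero, hvlastval]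
            | succ i =>
              intro hp
              exfalso
              have : (i : ℕ) + 1 < 1 := by simpa using hp
              omega
          · intro p
            induction p using Fin.cases with
            | zero =>
              intro hp
              exfalso
              simp only [Fin.val_zero] at hp
              omega
            | succ i =>
              intro _
              have h1 := hINV1 i.castSucc (by
                have := i.isLt
                simp only [Fin.coe_castSucc]
                omega)
              constructor
              · intro _
                rw [hv', PsiOp_succ, h1.2]
                omega
              · intro hmem
                exact absurd ((succ_mem_rotT T).2 h1.1) hmem
      obtain ⟨a', j', hINV1', hINV2'⟩ := hnewinv
      obtain ⟨c, hc⟩ := IH (2 * (∑ r, v' r) + (n+1)) (by omega) (n+1) v' (rotT T) a' j'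
        le_rfl hINV1' hINV2' G hGdeg hGvan
      -- recovery
      have hrec : aeval (ThetaMap n) G = F₁ := by
        rw [hG, aeval_aeval]
        have hfun : (fun r => aeval (ThetaMap n) (snocmap r))
            = (X : Fin (n+1) → MvPolynomial (Fin (n+1)) Kqt) := by
          funext r
          induction r using Fin.lastCases with
          | last =>
            rw [hsnoc, Fin.snoc_last, map_mul, aeval_C, aeval_X,
              MvPolynomial.algebraMap_eq, ThetaMap_zero, ← mul_assoc, ← C_mul,
              mul_inv_cancel₀ qk_ne_zero, C_1, one_mul]
          | cast i => rw [hsnoc, Fin.snoc_castSucc, aeval_X, ThetaMap_succ]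
        rw [hfun, aeval_X_left]
        rfl
      have hfun : (fun r => aeval (phiT T) (ThetaMap n r))
            = (fun r => aeval (ThetaMap n) (phiT (rotT T) r)) := by
          funext r
          induction r using Fin.cases with
          | zero =>
            rw [ThetaMap_zero, map_mul, aeval_C, aeval_X, MvPolynomial.algebraMap_eq]
            rw [phiT, if_pos hlast]
            rw [show phiT (rotT T) 0 = X 0 from by rw [phiT, if_pos (zero_mem_rotT T)]]
            rw [aeval_X, ThetaMap_zero]
          | succ i =>
            rw [ThetaMap_succ, aeval_X]
            by_cases hmem : i.castSucc ∈ T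
            · rw [show phiT (rotT T) i.succ = X i.succ from by
                rw [phiT, if_pos ((succ_mem_rotT T).2 hmem)]]
              rw [aeval_X, ThetaMap_succ, phiT, if_pos hmem]
            · rw [show phiT (rotT T) i.succ = C (tk ^ chiT (rotT T) i.succ) from by
                rw [phiT, if_neg (fun hc => hmem ((succ_mem_rotT T).1 hc))]]
              rw [aeval_C, MvPolynomial.algebraMap_eq, chiT_rot T hlast, phiT, if_neg hmem]
      have hmain : aeval (phiT T) F₁ = aeval (ThetaMap n) (aeval (phiT (rotT T)) G) := by
        rw [← hrec, aeval_aeval (phiT T) (ThetaMap n) G, hfun]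
        exact (aeval_aeval (ThetaMap n) (phiT (rotT T)) G).symm
      refine ⟨c * qk⁻¹ ^ (v (Fin.last n) - 1), ?_⟩
      rw [hH, map_mul, map_sub, aeval_X, aeval_C, MvPolynomial.algebraMap_eq]
      rw [show phiT T (Fin.last n) = X (Fin.last n) from by rw [phiT, if_pos hlast]]
      rw [hmain, hc, map_mul]
      rw [show aeval (ThetaMap n) (C c : MvPolynomial (Fin (n+1)) Kqt) = C c from by
        rw [aeval_C, MvPolynomial.algebraMap_eq]]
      rw [map_prod]
      rw [Fin.prod_univ_succ (f := fun r => aeval (ThetaMap n) (gP (rotT T) v' r))]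
      rw [Finset.prod_congr rfl (fun i _ => Theta_gP_succ T hlast v i)]
      have hzero := Theta_gP_zero T hlast v hvlast1
      rw [hv']
      calc (X (Fin.last n) - C 1) *
            (C c * ((aeval (ThetaMap n)) (gP (rotT T) (PsiOp v) 0) *
              ∏ i : Fin n, gP T v i.castSucc))
          = C c * (((X (Fin.last n) - C 1) *
              (aeval (ThetaMap n)) (gP (rotT T) (PsiOp v) 0)) *
              ∏ i : Fin n, gP T v i.castSucc) := by ring
        _ = C c * ((C (qk⁻¹ ^ (v (Fin.last n) - 1)) * gP T v (Fin.last n)) *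
              ∏ i : Fin n, gP T v i.castSucc) := by rw [hzero]
        _ = C (c * qk⁻¹ ^ (v (Fin.last n) - 1)) * ∏ p : Fin (n+1), gP T v p := by
              rw [Fin.prod_univ_castSucc (f := gP T v), C_mul]
              ring
    · -- case M2 : strip last coordinate
      have hvlast : v (Fin.last n) = 0 := by
        have halast : a ≤ (Fin.last n : ℕ) := by
          by_contra h
          exact hlast (hINV1 _ (by omega)).1
        exact (hINV2 _ halast).2 hlast
      set v' : Fin n → ℕ := fun i => v i.castSucc with hv'
      have hsum : ∑ i : Fin (n+1), v i = ∑ i : Fin n, v' i := by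
        rw [Fin.sum_univ_castSucc (f := v), hvlast, add_zero]
      set σm : Fin (n+1) → MvPolynomial (Fin n) Kqt :=
        (Fin.last n).insertNth 1 (fun i => C tk * X i) with hσ
      set F₁ := aeval σm F with hF₁
      have hvdecomp : (Fin.last n).insertNth 0 v' = v := by
        funext r
        induction r using Fin.lastCases with
        | last => rw [Fin.insertNth_apply_same, hvlast]
        | cast i =>
          conv_lhs => rw [← congrFun (Fin.succAbove_last (n := n)) i]
          rw [Fin.insertNth_apply_succAbove]
      have hF₁deg : F₁.totalDegree ≤ ∑ i, v' i := by
        refine le_trans (totalDegree_aeval_le _ ?_ F) (by rw [← hsum]; exact hdeg)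
        intro r
        rcases eq_or_ne r (Fin.last n) with rfl | hr
        · rw [hσ, Fin.insertNth_apply_same]; simp
        · obtain ⟨i, rfl⟩ := Fin.exists_succAbove_eq hr
          rw [hσ, Fin.insertNth_apply_succAbove]
          refine le_trans (totalDegree_mul _ _) ?_
          simp [totalDegree_X]
      have hF₁van : ∀ w : Fin n → ℕ, (∑ i, w i) ≤ ∑ i, v' i → w ≠ v' →
          eval (specPt w) F₁ = 0 := by
        intro w hw hwne
        rw [hF₁, eval_aeval]
        have hcoords : (fun r => eval (specPt w) (σm r))
            = specPt ((Fin.last n).insertNth 0 w) := by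
          rw [specPt_insertNth _ _ (fun i hi => absurd hi (not_le.2 (Fin.castSucc_lt_last i)))]
          funext r
          rcases eq_or_ne r (Fin.last n) with rfl | hr
          · rw [hσ, Fin.insertNth_apply_same, Fin.insertNth_apply_same, map_one]
          · obtain ⟨i, rfl⟩ := Fin.exists_succAbove_eq hr
            rw [hσ, Fin.insertNth_apply_succAbove, Fin.insertNth_apply_succAbove,
              map_mul, eval_C, eval_X]
        rw [hcoords]
        refine hvan _ (by rw [sum_insertNth, hsum]; exact hw) ?_
        intro heq
        apply hwne
        funext i
        have h1 := congrFun heq ((Fin.last n).succAbove i)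
        rw [Fin.insertNth_apply_succAbove] at h1
        rw [congrFun (Fin.succAbove_last (n := n)) i] at h1
        exact h1
      have hINV1' : ∀ p : Fin n, (p : ℕ) < a → p ∈ stripT T ∧ v' p = j := by
        intro p hp
        have h1 := hINV1 p.castSucc (by simpa using hp)
        exact ⟨(mem_stripT T).2 h1.1, h1.2⟩
      have hINV2' : ∀ p : Fin n, a ≤ (p : ℕ) →
          (p ∈ stripT T → v' p = j + 1) ∧ (p ∉ stripT T → v' p = 0) := by
        intro p hp
        have h1 := hINV2 p.castSucc (by simpa using hp)
        exact ⟨fun h => h1.1 ((mem_stripT T).1 h),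
          fun h => h1.2 (fun hc => h ((mem_stripT T).2 hc))⟩
      obtain ⟨c, hc⟩ := IH (2 * (∑ i, v' i) + n) (by omega) n v' (stripT T) a j
        le_rfl hINV1' hINV2' F₁ hF₁deg hF₁van
      have hcomp : aeval (phiT T) F = aeval (LamMap n) (aeval (phiT (stripT T)) F₁) := by
        rw [hF₁, aeval_aeval, aeval_aeval]
        have hfun : (fun r => aeval (fun p => aeval (LamMap n) (phiT (stripT T) p)) (σm r))
            = phiT T := by
          funext r
          rcases eq_or_ne r (Fin.last n) with rfl | hr
          · rw [hσ, Fin.insertNth_apply_same, map_one, phiT, if_neg hlast, chiT_last,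
              pow_zero, C_1]
          · obtain ⟨i, rfl⟩ := Fin.exists_succAbove_eq hr
            rw [hσ, Fin.insertNth_apply_succAbove, map_mul, aeval_C,
              MvPolynomial.algebraMap_eq, aeval_X]
            by_cases hmem : i ∈ stripT T
            · rw [show phiT (stripT T) i = X i from by rw [phiT, if_pos hmem]]
              rw [aeval_X, LamMap, ← mul_assoc, ← C_mul, mul_inv_cancel₀ tk_ne_zero,
                C_1, one_mul, congrFun (Fin.succAbove_last (n := n)) i,
                phiT, if_pos ((mem_stripT T).1 hmem)]
            · rw [show phiT (stripT T) i = C (tk ^ chiT (stripT T) i) from by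
                rw [phiT, if_neg hmem]]
              rw [aeval_C, MvPolynomial.algebraMap_eq, ← C_mul,
                congrFun (Fin.succAbove_last (n := n)) i, phiT,
                if_neg (fun hc => hmem ((mem_stripT T).2 hc)),
                chiT_strip T hlast i, pow_succ]
              ring_nf
        rw [hfun]
      refine ⟨c * tk⁻¹ ^ (∑ i, v' i), ?_⟩
      rw [hcomp, hc, map_mul]
      rw [show aeval (LamMap n) (C c : MvPolynomial (Fin n) Kqt) = C c from by
        rw [aeval_C, MvPolynomial.algebraMap_eq]]
      rw [map_prod]
      rw [Finset.prod_congr rfl (fun p _ => Lam_gP T hlast v p)]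
      rw [Finset.prod_mul_distrib]
      have hCprod : ∏ p : Fin n, (C (tk⁻¹ ^ v p.castSucc) : MvPolynomial (Fin (n+1)) Kqt)
          = C (tk⁻¹ ^ (∑ i, v' i)) := by
        rw [Finset.prod_congr rfl (fun p _ => by rw [C_pow]), Finset.prod_pow_eq_pow_sum,
          ← C_pow]
      rw [hCprod]
      have hgprod : ∏ p : Fin n, gP T v p.castSucc = ∏ p : Fin (n+1), gP T v p := by
        rw [Fin.prod_univ_castSucc (f := gP T v), gP, if_pos hvlast, mul_one]
      rw [hgprod, C_mul]
      ring

/-! ### coefficient extraction -/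

lemma sum_single_apply {k : ℕ} (e : Fin k → ℕ) (j : Fin k) :
    (∑ i, Finsupp.single i (e i)) j = e j := by
  rw [Finset.sum_apply']
  rw [Finset.sum_eq_single j]
  · rw [Finsupp.single_apply, if_pos rfl]
  · intro i _ hne
    rw [Finsupp.single_apply, if_neg hne]
  · intro h
    exact absurd (Finset.mem_univ j) h

lemma single_reconstruct {k : ℕ} (ν : Fin k →₀ ℕ) (j : Fin k) (hj : ν j ≠ 0) (e : ℕ)
    (h : ν - Finsupp.single j 1 = Finsupp.single j e) : ν = Finsupp.single j (e+1) := by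
  ext i
  have hi := DFunLike.congr_fun h i
  rw [Finsupp.tsub_apply] at hi
  rcases eq_or_ne i j with rfl | hne
  · simp only [Finsupp.single_eq_same] at hi ⊢
    omega
  · simp only [Finsupp.single_apply, if_neg (Ne.symm hne)] at hi ⊢
    omega

lemma single_sub_one {k : ℕ} (j : Fin k) (e : ℕ) :
    Finsupp.single j (e+1) - Finsupp.single j 1 = Finsupp.single j e := by
  ext i
  rw [Finsupp.tsub_apply]
  rcases eq_or_ne i j with rfl | hne
  · simp only [Finsupp.single_eq_same]
    omega
  · simp only [Finsupp.single_apply, if_neg (Ne.symm hne)]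
    omega

lemma lin_prod {k : ℕ} (j : Fin k) (S : Finset ℕ) (f : ℕ → Kqt) :
    (∀ ν : Fin k →₀ ℕ, coeff ν (∏ s ∈ S, (X j - C (f s))) ≠ 0 →
        ∃ e, e ≤ S.card ∧ ν = Finsupp.single j e)
    ∧ coeff (Finsupp.single j S.card) (∏ s ∈ S, (X j - C (f s))) = 1 := by
  classical
  induction S using Finset.induction with
  | empty =>
    constructor
    · intro ν hν
      rw [Finset.prod_empty, MvPolynomial.coeff_one] at hν
      refine ⟨0, le_rfl, ?_⟩
      rw [Finsupp.single_zero]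
      by_contra hne
      rw [if_neg (fun hc => hne hc.symm)] at hν
      exact hν rfl
    · rw [Finset.prod_empty, Finset.card_empty, Finsupp.single_zero, MvPolynomial.coeff_one,
        if_pos rfl]
  | @insert s₀ S hs₀ IH =>
    rw [Finset.prod_insert hs₀, mul_comm, Finset.card_insert_of_notMem hs₀]
    constructor
    · intro ν hν
      rw [mul_sub, coeff_sub] at hν
      have hcc : (∏ s ∈ S, (X j - C (f s))) * C (f s₀)
          = C (f s₀) * ∏ s ∈ S, (X j - C (f s)) := mul_comm _ _
      rw [hcc, coeff_C_mul, coeff_mul_X'] at hν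
      by_cases hmem : j ∈ ν.support
      · rw [if_pos hmem] at hν
        rcases ne_or_eq (coeff (ν - Finsupp.single j 1) (∏ s ∈ S, (X j - C (f s)))) 0
          with h1 | h1
        · obtain ⟨e, he, hee⟩ := IH.1 _ h1
          exact ⟨e + 1, by omega,
            single_reconstruct ν j (Finsupp.mem_support_iff.1 hmem) e hee⟩
        · rw [h1] at hν
          rcases ne_or_eq (coeff ν (∏ s ∈ S, (X j - C (f s)))) 0 with h2 | h2
          · obtain ⟨e, he, hee⟩ := IH.1 _ h2
            exact ⟨e, by omega, hee⟩
          · rw [h2] at hν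
            simp at hν
      · rw [if_neg hmem] at hν
        rcases ne_or_eq (coeff ν (∏ s ∈ S, (X j - C (f s)))) 0 with h2 | h2
        · obtain ⟨e, he, hee⟩ := IH.1 _ h2
          exact ⟨e, by omega, hee⟩
        · rw [h2] at hν
          simp at hν
    · rw [mul_sub, coeff_sub]
      have hcc : (∏ s ∈ S, (X j - C (f s))) * C (f s₀)
          = C (f s₀) * ∏ s ∈ S, (X j - C (f s)) := mul_comm _ _
      rw [hcc, coeff_C_mul, coeff_mul_X']
      have hmem : j ∈ (Finsupp.single j (S.card + 1)).support := by
        rw [Finsupp.mem_support_iff, Finsupp.single_eq_same]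
        omega
      rw [if_pos hmem, single_sub_one, IH.2]
      have hzero : coeff (Finsupp.single j (S.card + 1)) (∏ s ∈ S, (X j - C (f s))) = 0 := by
        by_contra hne
        obtain ⟨e, he, hee⟩ := IH.1 _ hne
        have := DFunLike.congr_fun hee j
        rw [Finsupp.single_eq_same, Finsupp.single_eq_same] at this
        omega
      rw [hzero, mul_zero, sub_zero]

lemma coeff_top_prod {k : ℕ} (P : Fin k → MvPolynomial (Fin k) Kqt) (d : Fin k → ℕ)
    (hP : ∀ j, ∃ (S : Finset ℕ) (f : ℕ → Kqt), S.card = d j ∧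
      P j = ∏ s ∈ S, (X j - C (f s))) :
    coeff (∑ j, Finsupp.single j (d j)) (∏ j, P j) = 1 := by
  classical
  suffices h : ∀ S : Finset (Fin k),
      (∀ ν : Fin k →₀ ℕ, coeff ν (∏ j ∈ S, P j) ≠ 0 → ∀ i ∉ S, ν i = 0) ∧
      coeff (∑ j ∈ S, Finsupp.single j (d j)) (∏ j ∈ S, P j) = 1 by
    exact (h Finset.univ).2
  intro S
  induction S using Finset.induction with
  | empty =>
    constructor
    · intro ν hν i _
      rw [Finset.prod_empty, MvPolynomial.coeff_one] at hν
      by_cases h0 : (0 : Fin k →₀ ℕ) = ν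
      · rw [← h0]; rfl
      · rw [if_neg h0] at hν; exact absurd rfl hν
    · rw [Finset.prod_empty, Finset.sum_empty, MvPolynomial.coeff_one, if_pos rfl]
  | @insert j₀ S hj₀ IH =>
    obtain ⟨Sr, f, hcard, hPj⟩ := hP j₀
    have hlin := lin_prod j₀ Sr f
    rw [← hPj, hcard] at hlin
    constructor
    · intro ν hν i hi
      rw [Finset.prod_insert hj₀] at hν
      rw [MvPolynomial.coeff_mul] at hν
      obtain ⟨x, hx, hxne⟩ := Finset.exists_ne_zero_of_sum_ne_zero hν
      have hx1 : coeff x.1 (P j₀) ≠ 0 := fun h => hxne (by rw [h, zero_mul])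
      have hx2 : coeff x.2 (∏ j ∈ S, P j) ≠ 0 := fun h => hxne (by rw [h, mul_zero])
      obtain ⟨e, -, hee⟩ := hlin.1 _ hx1
      have hsum := (Finset.HasAntidiagonal.mem_antidiagonal.1 hx)
      have hνi := DFunLike.congr_fun hsum i
      have hx1i : x.1 i = 0 := by
        rw [hee, Finsupp.single_apply, if_neg]
        rintro rfl
        exact hi (Finset.mem_insert_self _ _)
      have hx2i : x.2 i = 0 := IH.1 _ hx2 i (fun hc => hi (Finset.mem_insert_of_mem hc))
      rw [Finsupp.add_apply, hx1i, hx2i] at hνi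
      exact hνi.symm
    · rw [Finset.prod_insert hj₀, Finset.sum_insert hj₀, MvPolynomial.coeff_mul]
      rw [Finset.sum_eq_single (Finsupp.single j₀ (d j₀), ∑ j ∈ S, Finsupp.single j (d j))]
      · rw [hlin.2, IH.2, one_mul]
      · rintro ⟨x1, x2⟩ hx hne
        by_contra hprod
        have hx1 : coeff x1 (P j₀) ≠ 0 := fun h => hprod (by rw [h, zero_mul])
        have hx2 : coeff x2 (∏ j ∈ S, P j) ≠ 0 := fun h => hprod (by rw [h, mul_zero])
        obtain ⟨e, -, hee⟩ := hlin.1 _ hx1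
        have hsum' : x1 + x2 = Finsupp.single j₀ (d j₀) + ∑ j ∈ S, Finsupp.single j (d j) :=
          Finset.HasAntidiagonal.mem_antidiagonal.1 hx
        have hj := DFunLike.congr_fun hsum' j₀
        have hx2j : x2 j₀ = 0 := IH.1 _ hx2 j₀ hj₀
        rw [Finsupp.add_apply, hx2j, add_zero] at hj
        have hμj : ((Finsupp.single j₀ (d j₀) + ∑ j ∈ S, Finsupp.single j (d j))) j₀
            = d j₀ := by
          rw [Finsupp.add_apply, Finsupp.single_eq_same]
          have : (∑ j ∈ S, Finsupp.single j (d j)) j₀ = 0 := by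
            rw [Finset.sum_apply']
            refine Finset.sum_eq_zero fun i hiS => ?_
            rw [Finsupp.single_apply, if_neg]
            rintro rfl
            exact hj₀ hiS
          rw [this, add_zero]
        rw [hμj] at hj
        have hx1eq : x1 = Finsupp.single j₀ (d j₀) := by
          rw [hee] at hj ⊢
          rw [Finsupp.single_eq_same] at hj
          rw [hj]
        apply hne
        have hx2eq : x2 = ∑ j ∈ S, Finsupp.single j (d j) := by
          ext i
          have hi := DFunLike.congr_fun hsum' i
          rw [Finsupp.add_apply, Finsupp.add_apply] at hi
          have hx1i := DFunLike.congr_fun hx1eq i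
          omega
        rw [hx1eq, hx2eq]
      · intro hmem
        exfalso
        exact hmem (Finset.HasAntidiagonal.mem_antidiagonal.2 rfl)

lemma prod_X_pow {k : ℕ} (e : Fin k → ℕ) :
    ∏ j, (X j : MvPolynomial (Fin k) Kqt) ^ e j
      = monomial (∑ j, Finsupp.single j (e j)) 1 := by
  classical
  suffices h : ∀ S : Finset (Fin k), ∏ j ∈ S, (X j : MvPolynomial (Fin k) Kqt) ^ e j
      = monomial (∑ j ∈ S, Finsupp.single j (e j)) 1 from h Finset.univ
  intro S
  induction S using Finset.induction with
  | empty =>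
    rw [Finset.prod_empty, Finset.sum_empty, monomial_zero', C_1]
  | @insert j₀ S hj₀ IH =>
    rw [Finset.prod_insert hj₀, Finset.sum_insert hj₀, IH, X_pow_eq_monomial,
      monomial_mul, one_mul]

lemma strictmono_key {k N : ℕ} (β : Fin k → Fin N) (hβ : StrictMono β) :
    ∀ (d : ℕ) (l1 l2 : Fin k), (l1 : ℕ) + d = (l2 : ℕ) → (β l1 : ℕ) + d ≤ (β l2 : ℕ) := by
  intro d
  induction d with
  | zero =>
    intro l1 l2 h
    have : l1 = l2 := Fin.ext (by omega)
    subst this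
    omega
  | succ d IHd =>
    intro l1 l2 h
    have hl2 : 0 < (l2 : ℕ) := by omega
    have hl2k := l2.isLt
    set l2' : Fin k := ⟨(l2 : ℕ) - 1, by omega⟩ with hl2'
    have h1 := IHd l1 l2' (by rw [hl2']; simp; omega)
    have h2 : β l2' < β l2 := hβ (by rw [Fin.lt_def, hl2']; simp; omega)
    rw [Fin.lt_def] at h2
    omega

end PRF

open PRF

/-- Let `β[1] < … < β[k]` in `{1,…,N}`, let `u(β)` have entry `m` at the
positions `β[j]` and `0` elsewhere, and let `χ_β(i) = N − i − #{l : β[l] > i}`.  If `M`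
is the monic shifted nonsymmetric Macdonald polynomial for `u(β)`, then substituting
`t^{χ_β(i)}` for each `x_i` with `i ∉ σ(β)` (keeping `x_{β[j]}` free, renamed as the `j`-th
variable) yields
`M(x^{(β)}) = Π_{j=1}^{k} (x_{β[j]} − t^{N+j−k−β[j]}) Π_{i=1}^{m−1} (x_{β[j]} − t^{N−k} q^i)`. -/
theorem permuted_rectangular_factorization
    (N k m : ℕ) (hm : 1 ≤ m) (hk1 : 1 ≤ k) (hkN : k ≤ N)
    (β : Fin k → Fin N) (hβ : StrictMono β)
    (u : Fin N → ℕ) (hu : u = fun i : Fin N => if ∃ j : Fin k, β j = i then m else 0)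
    (M : MvPolynomial (Fin N) Kqt) (hM : MonicShiftedMacdonald u M) :
    aeval (fun i : Fin N =>
        (∑ j : Fin k, if β j = i then (X j : MvPolynomial (Fin k) Kqt) else 0) +
        (if ∀ j : Fin k, β j ≠ i then
          C (tk ^ (N - 1 - (i : ℕ) - (univ.filter fun l : Fin k => i < β l).card))
         else 0)) M =
      ∏ j : Fin k,
        ((X j - C (tk ^ (N + (j : ℕ) - k - (β j : ℕ)))) *
          ∏ l ∈ Icc 1 (m - 1), (X j - C (tk ^ (N - k) * qk ^ l))) := by
  classical
  set T : Finset (Fin N) := Finset.univ.image β with hT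
  set ξ : Fin N → MvPolynomial (Fin k) Kqt := fun i : Fin N =>
        (∑ j : Fin k, if β j = i then (X j : MvPolynomial (Fin k) Kqt) else 0) +
        (if ∀ j : Fin k, β j ≠ i then
          C (tk ^ (N - 1 - (i : ℕ) - (univ.filter fun l : Fin k => i < β l).card))
         else 0) with hξ
  have hmemT : ∀ i : Fin N, i ∈ T ↔ ∃ j : Fin k, β j = i := by
    intro i
    rw [hT]
    simp [Finset.mem_image]
  have hTcard : T.card = k := by
    rw [hT, Finset.card_image_of_injective _ hβ.injective, Finset.card_univ, Fintype.card_fin]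
  have hξβ : ∀ j : Fin k, ξ (β j) = X j := by
    intro j
    rw [hξ]
    dsimp only
    have h1 : (∑ j' : Fin k, if β j' = β j then (X j' : MvPolynomial (Fin k) Kqt) else 0)
        = X j := by
      rw [Finset.sum_eq_single j]
      · rw [if_pos rfl]
      · intro j' _ hne
        rw [if_neg (fun hc => hne (hβ.injective hc))]
      · intro h
        exact absurd (Finset.mem_univ j) h
    rw [h1, if_neg (by push_neg; exact ⟨j, rfl⟩), add_zero]
  have hcardfilter : ∀ i : Fin N, (univ.filter fun l : Fin k => i < β l).card
      = (T.filter fun r => i < r).card := by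
    intro i
    have himg : T.filter (fun r => i < r) = (univ.filter fun l : Fin k => i < β l).image β := by
      ext r
      simp only [Finset.mem_filter, Finset.mem_image, Finset.mem_univ, true_and]
      constructor
      · rintro ⟨hrT, hlt⟩
        obtain ⟨l, hl⟩ := (hmemT r).1 hrT
        exact ⟨l, by rw [hl]; exact hlt, hl⟩
      · rintro ⟨l, hl, rfl⟩
        exact ⟨(hmemT _).2 ⟨l, rfl⟩, hl⟩
    rw [himg, Finset.card_image_of_injective _ hβ.injective]
  have hξoff : ∀ i : Fin N, i ∉ T → ξ i = C (tk ^ chiT T i) := by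
    intro i hi
    rw [hξ]
    dsimp only
    have h1 : (∑ j' : Fin k, if β j' = i then (X j' : MvPolynomial (Fin k) Kqt) else 0) = 0 :=
      Finset.sum_eq_zero fun j' _ => if_neg (fun hc => hi ((hmemT i).2 ⟨j', hc⟩))
    have h2 : ∀ j : Fin k, β j ≠ i := fun j hc => hi ((hmemT i).2 ⟨j, hc⟩)
    rw [h1, if_pos h2, zero_add, chiT, hcardfilter]
  have huT : ∀ i, i ∈ T → u i = m := by
    intro i hi
    rw [hu]
    exact if_pos ((hmemT i).1 hi)
  have huoff : ∀ i, i ∉ T → u i = 0 := by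
    intro i hi
    rw [hu]
    exact if_neg (fun hc => hi ((hmemT i).2 hc))
  have hsumu : ∑ i, u i = k * m := by
    have hfilter : Finset.univ.filter (fun i : Fin N => ∃ j, β j = i) = T := by
      ext i
      simp only [Finset.mem_filter, Finset.mem_univ, true_and]
      exact (hmemT i).symm
    have h1 : ∑ i, u i = ∑ i, (if ∃ j : Fin k, β j = i then m else 0) := by rw [hu]
    rw [h1, ← Finset.sum_filter, hfilter, Finset.sum_const, smul_eq_mul, hTcard]
  have hINV1 : ∀ p : Fin N, (p : ℕ) < 0 → p ∈ T ∧ u p = m - 1 :=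
    fun p hp => absurd hp (Nat.not_lt_zero _)
  have hINV2 : ∀ p : Fin N, 0 ≤ (p : ℕ) →
      (p ∈ T → u p = (m - 1) + 1) ∧ (p ∉ T → u p = 0) := by
    intro p _
    constructor
    · intro hp
      rw [huT p hp]
      omega
    · exact huoff p
  obtain ⟨c, hc⟩ := SM (2 * (∑ i, u i) + N) N u T 0 (m - 1) le_rfl hINV1 hINV2 M hM.1 hM.2.2
  have hcompose : aeval ξ M = aeval ξ (aeval (phiT T) M) := by
    rw [aeval_aeval]
    have hfun : (fun p => aeval ξ (phiT T p)) = ξ := by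
      funext p
      by_cases hp : p ∈ T
      · rw [phiT, if_pos hp, aeval_X]
      · rw [phiT, if_neg hp, aeval_C, MvPolynomial.algebraMap_eq, hξoff p hp]
    rw [hfun]
  have hchiβ : ∀ j : Fin k, chiT T (β j) = N + (j : ℕ) - k - (β j : ℕ) := by
    intro j
    have hflt : (T.filter fun r => β j < r)
        = (Finset.univ.filter fun l : Fin k => j < l).image β := by
      ext r
      simp only [Finset.mem_filter, Finset.mem_image, Finset.mem_univ, true_and]
      constructor
      · rintro ⟨hrT, hlt⟩
        obtain ⟨l, hl⟩ := (hmemT r).1 hrT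
        refine ⟨l, ?_, hl⟩
        rw [← hl] at hlt
        exact hβ.lt_iff_lt.1 hlt
      · rintro ⟨l, hl, rfl⟩
        exact ⟨(hmemT _).2 ⟨l, rfl⟩, hβ hl⟩
    have hIoi : (Finset.univ.filter fun l : Fin k => j < l) = Finset.Ioi j := by
      ext l
      simp [Finset.mem_Ioi]
    rw [chiT, hflt, Finset.card_image_of_injective _ hβ.injective, hIoi, Fin.card_Ioi]
    have hlastk : (j : ℕ) + (k - 1 - (j : ℕ)) = (⟨k - 1, by omega⟩ : Fin k) := by
      simp
      omega
    have hb := strictmono_key β hβ (k - 1 - (j : ℕ)) j ⟨k - 1, by omega⟩ hlastk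
    have hβk := (β ⟨k - 1, by omega⟩).isLt
    have hjk := j.isLt
    have hβjN := (β j).isLt
    omega
  have hEQ : aeval ξ M = C c *
      ∏ j : Fin k, ((X j - C (tk ^ (N + (j : ℕ) - k - (β j : ℕ)))) *
        ∏ l ∈ Icc 1 (m - 1), (X j - C (tk ^ (N - k) * qk ^ l))) := by
    rw [hcompose, hc, map_mul]
    rw [show aeval ξ (C c : MvPolynomial (Fin N) Kqt) = C c from by
      rw [aeval_C, MvPolynomial.algebraMap_eq]]
    rw [map_prod]
    have hprodT : ∏ p : Fin N, aeval ξ (gP T u p)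
        = ∏ j : Fin k, aeval ξ (gP T u (β j)) := by
      rw [← Finset.prod_image (f := fun p => aeval ξ (gP T u p)) (g := β)
        (s := Finset.univ) (fun x _ y _ h => hβ.injective h)]
      refine (Finset.prod_subset (Finset.subset_univ _) ?_).symm
      intro p _ hp
      have hpT : p ∉ T := by rwa [hT]
      rw [gP, if_pos (huoff p hpT), map_one]
    have hfact : ∀ j : Fin k, aeval ξ (gP T u (β j))
        = (X j - C (tk ^ (N + (j : ℕ) - k - (β j : ℕ)))) *
          ∏ l ∈ Icc 1 (m - 1), (X j - C (tk ^ (N - k) * qk ^ l)) := by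
      intro j
      have hmemβ : β j ∈ T := (hmemT _).2 ⟨j, rfl⟩
      have hm0 : u (β j) ≠ 0 := by
        rw [huT _ hmemβ]
        omega
      rw [gP, if_neg hm0, map_mul, map_prod, map_sub, aeval_X, aeval_C,
        MvPolynomial.algebraMap_eq, hξβ j, hchiβ j, huT _ hmemβ, hTcard]
      refine congrArg _ (Finset.prod_congr rfl fun s _ => ?_)
      rw [map_sub, aeval_X, aeval_C, MvPolynomial.algebraMap_eq, hξβ j]
    rw [hprodT, Finset.prod_congr rfl (fun j _ => hfact j)]
  suffices hc1 : c = 1 by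
    rw [hEQ, hc1, C_1, one_mul]
  -- coefficient comparison at μ
  set μ : Fin k →₀ ℕ := ∑ j, Finsupp.single j m with hμ
  have hB : coeff μ (∏ j : Fin k, ((X j - C (tk ^ (N + (j : ℕ) - k - (β j : ℕ)))) *
      ∏ l ∈ Icc 1 (m - 1), (X j - C (tk ^ (N - k) * qk ^ l)))) = 1 := by
    rw [hμ]
    refine coeff_top_prod _ (fun _ => m) ?_
    intro j
    refine ⟨insert 0 (Finset.Icc 1 (m - 1)),
      fun s => if s = 0 then tk ^ (N + (j : ℕ) - k - (β j : ℕ)) else tk ^ (N - k) * qk ^ s,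
      ?_, ?_⟩
    · rw [Finset.card_insert_of_notMem (by simp), Nat.card_Icc]
      omega
    · rw [Finset.prod_insert (by simp)]
      dsimp only
      rw [if_pos rfl]
      refine congrArg _ (Finset.prod_congr rfl fun s hs => ?_)
      have : s ≠ 0 := by
        rw [Finset.mem_Icc] at hs
        omega
      rw [if_neg this]
  have hw₀mem : Finsupp.equivFunOnFinite.symm u ∈ M.support := by
    rw [MvPolynomial.mem_support_iff, hM.2.1]
    exact one_ne_zero
  have hw₀app : ∀ i, (Finsupp.equivFunOnFinite.symm u) i = u i := fun i => rfl
  have hA : coeff μ (aeval ξ M) = 1 := by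
    have hexp : aeval ξ M = ∑ w ∈ M.support, C (coeff w M) * ∏ i : Fin N, ξ i ^ w i := by
      conv_lhs => rw [M.as_sum]
      rw [map_sum]
      refine Finset.sum_congr rfl fun w _ => ?_
      rw [aeval_monomial, MvPolynomial.algebraMap_eq,
        Finsupp.prod_fintype _ _ (fun i => pow_zero _)]
    rw [hexp, coeff_sum]
    rw [Finset.sum_eq_single (Finsupp.equivFunOnFinite.symm u)]
    · rw [coeff_C_mul, hM.2.1, one_mul]
      have hsplit : ∏ i : Fin N, ξ i ^ (Finsupp.equivFunOnFinite.symm u) i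
          = ∏ j : Fin k, (X j : MvPolynomial (Fin k) Kqt) ^ m := by
        have e1 : ∏ i : Fin N, ξ i ^ (Finsupp.equivFunOnFinite.symm u) i
            = ∏ i ∈ T, ξ i ^ u i := by
          rw [Finset.prod_congr rfl (fun i _ => by rw [hw₀app])]
          refine (Finset.prod_subset (Finset.subset_univ _) ?_).symm
          intro i _ hi
          rw [huoff i hi, pow_zero]
        rw [e1]
        conv_lhs => rw [hT]
        rw [Finset.prod_image (fun x _ y _ h => hβ.injective h)]
        refine Finset.prod_congr rfl fun j _ => ?_
        rw [hξβ, huT _ ((hmemT _).2 ⟨j, rfl⟩)]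
      rw [hsplit, PRF.prod_X_pow, coeff_monomial, hμ, if_pos rfl]
    · intro w hwsupp hwne
      rw [coeff_C_mul]
      have hon : ∏ i ∈ T, ξ i ^ w i = ∏ j : Fin k, (X j : MvPolynomial (Fin k) Kqt) ^ w (β j) := by
        conv_lhs => rw [hT]
        rw [Finset.prod_image (fun x _ y _ h => hβ.injective h)]
        exact Finset.prod_congr rfl fun j _ => by rw [hξβ]
      have hoff : ∏ i ∈ Tᶜ, ξ i ^ w i = C (∏ i ∈ Tᶜ, (tk ^ chiT T i) ^ w i) := by
        rw [map_prod]
        refine Finset.prod_congr rfl fun i hi => ?_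
        have hiT : i ∉ T := by simpa using hi
        rw [hξoff i hiT, ← C_pow]
      rw [← Finset.prod_mul_prod_compl T (fun i => ξ i ^ w i), hon, hoff, PRF.prod_X_pow]
      rw [C_apply, monomial_mul, add_zero, one_mul, coeff_monomial]
      by_cases hall : (∑ j, Finsupp.single j (w (β j))) = μ
      · exfalso
        have hwβ : ∀ j : Fin k, w (β j) = m := by
          intro j
          have h1 := DFunLike.congr_fun hall j
          rw [hμ] at h1
          rw [sum_single_apply] at h1
          rw [sum_single_apply (fun j => m) j] at h1
          exact h1
        have hne' : ∃ i, i ∉ T ∧ w i ≠ 0 := by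
          by_contra hno
          push_neg at hno
          apply hwne
          ext i
          rw [hw₀app]
          by_cases hiT : i ∈ T
          · obtain ⟨j, rfl⟩ := (hmemT i).1 hiT
            rw [hwβ, huT _ hiT]
          · rw [hno i hiT, huoff i hiT]
        obtain ⟨i₀, hi₀T, hi₀⟩ := hne'
        have hTsum : ∑ i ∈ T, w i = k * m := by
          conv_lhs => rw [hT]
          rw [Finset.sum_image (fun x _ y _ h => hβ.injective h)]
          rw [Finset.sum_congr rfl (fun j _ => hwβ j), Finset.sum_const, smul_eq_mul,
            Finset.card_univ, Fintype.card_fin]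
        have hi₀mem : i₀ ∈ Tᶜ := Finset.mem_compl.2 hi₀T
        have hoffsum : w i₀ ≤ ∑ i ∈ Tᶜ, w i := by
          simpa using Finset.single_le_sum (f := fun i => w i) (fun _ _ => Nat.zero_le _) hi₀mem
        have hfullsum : ∑ i ∈ T, w i + ∑ i ∈ Tᶜ, w i = ∑ i, w i :=
          Finset.sum_add_sum_compl T _
        have hub : (w.sum fun _ e => e) ≤ M.totalDegree := le_totalDegree hwsupp
        have hwsum : (w.sum fun _ e => e) = ∑ i, w i := by
          rw [Finsupp.sum_fintype]
          intro i
          rfl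
        have hdegM := hM.1
        rw [hsumu] at hdegM
        omega
      · rw [if_neg hall, mul_zero]
    · intro h
      exact absurd hw₀mem h
  have hABc := congrArg (coeff μ) hEQ
  rw [hA, coeff_C_mul, hB, mul_one] at hABc
  exact hABc.symm


end
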